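/- arXiv:0905.0615 — 4 statements merged into one kernel-verified Lean document; each statement's English description precedes it below -/
import Mathlib

section
/- The Mañé potential φ satisfies: (1) φ(x,y) ≤ c(x,y) + α[0] for all x,y ∈ X (in particular φ is everywhere finite); (2) φ(x,x) = 0 for all x ∈ X; (3) a function u : X → ℝ is a critical sub-solution if and only if u(y) − u(x) ≤ φ(x,y) for all x,y ∈ X; (4) φ satisfies the triangle inequality φ(x,y) + φ(y,z) ≥ φ(x,z) for all x,y,z ∈ X. -/
open Metric Set Filter Topology

/-- `X` is a `B`-length space at scale `K`. -/
def IsBLengthSpaceAtScale (X : Type*) [MetricSpace X] (B K : ℝ) : Prop :=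
  ∀ x y : X, ∃ (n : ℕ) (p : ℕ → X), p 0 = x ∧ p n = y ∧
    (∀ i < n, dist (p i) (p (i + 1)) ≤ K) ∧
    ∑ i ∈ Finset.range n, dist (p i) (p (i + 1)) ≤ B * dist x y

/-- Uniform superlinearity of the cost `c`. -/
def UniformlySuperlinear {X : Type*} [MetricSpace X] (c : X → X → ℝ) : Prop :=
  ∀ k : ℝ, 0 ≤ k → ∃ C : ℝ, ∀ x y : X, k * dist x y - C ≤ c x y

/-- Uniform boundedness of the cost `c`. -/
def UniformlyBounded {X : Type*} [MetricSpace X] (c : X → X → ℝ) : Prop :=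
  ∀ R : ℝ, ∃ A : ℝ, ∀ x y : X, dist x y ≤ R → c x y ≤ A

/-- `u` is `α`-dominated: `u y - u x ≤ c x y + α` for all `x y`. -/
def Dominated {X : Type*} (c : X → X → ℝ) (α : ℝ) (u : X → ℝ) : Prop :=
  ∀ x y : X, u y - u x ≤ c x y + α

/-- Negative Lax-Oleinik semigroup. -/
noncomputable def Tm {X : Type*} (c : X → X → ℝ) (u : X → ℝ) (x : X) : ℝ :=
  ⨅ y, (u y + c y x)

/-- Positive Lax-Oleinik semigroup. -/
noncomputable def Tp {X : Type*} (c : X → X → ℝ) (u : X → ℝ) (x : X) : ℝ :=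
  ⨆ y, (u y - c x y)

/-- The critical constant `α[0]`: the smallest `α` for which `α`-dominated functions exist. -/
noncomputable def critValue {X : Type*} (c : X → X → ℝ) : ℝ :=
  sInf {α : ℝ | ∃ u : X → ℝ, Dominated c α u}

/-- The Mañé potential `φ(x,y) = sup_u (u y - u x)`, sup over critical sub-solutions. -/
noncomputable def mane {X : Type*} (c : X → X → ℝ) (x y : X) : ℝ :=
  sSup {r : ℝ | ∃ u : X → ℝ, Dominated c (critValue c) u ∧ r = u y - u x}

/-- A bi-infinite sequence is `(u,c,α)`-calibrated if all its finite subchains of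
consecutive terms are calibrated. -/
def IsCalibrated {X : Type*} (c : X → X → ℝ) (α : ℝ) (u : X → ℝ) (x : ℤ → X) : Prop :=
  ∀ (m : ℤ) (k : ℕ), u (x (m + k)) =
    u (x m) + (∑ i ∈ Finset.range k, c (x (m + i)) (x (m + i + 1))) + k * α

/-- The projected Aubry set of a critical sub-solution `u`. -/
def projAubry {X : Type*} (c : X → X → ℝ) (u : X → ℝ) : Set X :=
  {p : X | ∃ x : ℤ → X, IsCalibrated c (critValue c) u x ∧ x 0 = p}

/-- The set `Â_u` of pairs of consecutive terms of calibrated bi-infinite sequences. -/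
def aubryPairs {X : Type*} (c : X → X → ℝ) (u : X → ℝ) : Set (X × X) :=
  {q : X × X | ∃ (x : ℤ → X) (n : ℤ),
    IsCalibrated c (critValue c) u x ∧ x n = q.1 ∧ x (n + 1) = q.2}

/-- The projected Aubry set `A = ∩_u A_u`, intersection over all critical sub-solutions. -/
def projAubrySet {X : Type*} (c : X → X → ℝ) : Set X :=
  {p : X | ∀ u : X → ℝ, Dominated c (critValue c) u → p ∈ projAubry c u}

/-- The Aubry pair set `Â = ∩_u Â_u`, intersection over all critical sub-solutions. -/
def aubryPairsSet {X : Type*} (c : X → X → ℝ) : Set (X × X) :=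
  {q : X × X | ∀ u : X → ℝ, Dominated c (critValue c) u → q ∈ aubryPairs c u}

/-- `c_n(x,y)`: infimum of total cost over chains of length `n` from `x` to `y`. -/
noncomputable def cChain {X : Type*} (c : X → X → ℝ) (n : ℕ) (x y : X) : ℝ :=
  sInf {r : ℝ | ∃ p : ℕ → X, p 0 = x ∧ p n = y ∧
    r = ∑ i ∈ Finset.range n, c (p i) (p (i + 1))}

/-- `φ_n(x,y) = inf_{k ≥ n} (c_k(x,y) + k·α)`. -/
noncomputable def phiN {X : Type*} (c : X → X → ℝ) (α : ℝ) (n : ℕ) (x y : X) : ℝ :=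
  sInf {r : ℝ | ∃ k : ℕ, n ≤ k ∧ r = cChain c k x y + k * α}

/-- The Peierls barrier, with values in the extended reals. -/
noncomputable def peierls {X : Type*} (c : X → X → ℝ) (α : ℝ) (x y : X) : EReal :=
  Filter.liminf (fun n : ℕ => ((cChain c n x y + n * α : ℝ) : EReal)) Filter.atTop

/-- Negative Lax-Oleinik semigroup on extended-real-valued functions. -/
noncomputable def eTm {X : Type*} (c : X → X → ℝ) (u : X → EReal) (x : X) : EReal :=
  ⨅ y, (u y + (c y x : EReal))

/-- Positive Lax-Oleinik semigroup on extended-real-valued functions. -/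
noncomputable def eTp {X : Type*} (c : X → X → ℝ) (u : X → EReal) (x : X) : EReal :=
  ⨆ y, (u y - (c x y : EReal))

section ManeAux

variable {X : Type*} [MetricSpace X] [Nonempty X] {c : X → X → ℝ}

lemma Dominated.mono {α β : ℝ} {u : X → ℝ} (h : Dominated c α u) (hab : α ≤ β) :
    Dominated c β u := fun x y => (h x y).trans (by linarith)

lemma critSet_nonempty (hsl : UniformlySuperlinear c) :
    {α : ℝ | ∃ u : X → ℝ, Dominated c α u}.Nonempty := by
  obtain ⟨C, hC⟩ := hsl 0 le_rfl
  exact ⟨C, (fun _ : X => 0), fun x y => by have := hC x y; simp at this ⊢; linarith⟩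

lemma critSet_bddBelow :
    BddBelow {α : ℝ | ∃ u : X → ℝ, Dominated c α u} := by
  obtain ⟨x₀⟩ := (inferInstance : Nonempty X)
  refine ⟨-(c x₀ x₀), fun α hα => ?_⟩
  obtain ⟨u, hu⟩ := hα
  have := hu x₀ x₀
  linarith

lemma exists_dominated_critValue (hsl : UniformlySuperlinear c) :
    ∃ u : X → ℝ, Dominated c (critValue c) u := by
  have hne := critSet_nonempty (c := c) hsl
  have hchoice : ∀ n : ℕ, ∃ u : X → ℝ, Dominated c (critValue c + 1 / (n + 1)) u := by
    intro n
    have hpos : (0 : ℝ) < 1 / (n + 1) := by positivity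
    obtain ⟨α, hα, hlt⟩ := Real.lt_sInf_add_pos hne hpos
    obtain ⟨u, hu⟩ := hα
    exact ⟨u, hu.mono hlt.le⟩
  choose U hU using hchoice
  obtain ⟨x₀⟩ := (inferInstance : Nonempty X)
  have hstep : ∀ (n : ℕ) (x y : X),
      (U n y - U n x₀) - (U n x - U n x₀) ≤ c x y + critValue c + 1 / (n + 1) := by
    intro n x y
    have := hU n x y
    linarith
  have hone : ∀ n : ℕ, (1 : ℝ) / (n + 1) ≤ 1 := by
    intro n
    rw [div_le_one (by positivity)]
    exact le_add_of_nonneg_left (Nat.cast_nonneg n)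
  have hub : ∀ (n : ℕ) (x : X), U n x - U n x₀ ≤ c x₀ x + critValue c + 1 := by
    intro n x
    have h1 := hstep n x₀ x
    have := hone n
    simp only [sub_self, sub_zero] at h1
    linarith
  have hlb : ∀ (n : ℕ) (x : X), -(c x x₀ + critValue c + 1) ≤ U n x - U n x₀ := by
    intro n x
    have h1 := hstep n x x₀
    have := hone n
    simp only [sub_self, zero_sub] at h1
    linarith
  have hbddb : ∀ x : X, Filter.IsBoundedUnder (· ≥ ·) Filter.atTop
      (fun n => U n x - U n x₀) :=
    fun x => Filter.isBoundedUnder_of ⟨-(c x x₀ + critValue c + 1), fun n => hlb n x⟩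
  have hbdda : ∀ x : X, Filter.IsBoundedUnder (· ≤ ·) Filter.atTop
      (fun n => U n x - U n x₀) :=
    fun x => Filter.isBoundedUnder_of ⟨c x₀ x + critValue c + 1, fun n => hub n x⟩
  have hcob : ∀ x : X, Filter.IsCoboundedUnder (· ≥ ·) Filter.atTop
      (fun n => U n x - U n x₀) :=
    fun x => (hbdda x).isCoboundedUnder_ge
  refine ⟨fun x => Filter.liminf (fun n => U n x - U n x₀) Filter.atTop, ?_⟩
  intro x y
  rw [sub_le_iff_le_add]
  by_contra hcon
  push_neg at hcon
  set ε : ℝ := (Filter.liminf (fun n => U n y - U n x₀) Filter.atTop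
      - ((c x y + critValue c) + Filter.liminf (fun n => U n x - U n x₀) Filter.atTop)) / 2
      with hε
  have hεpos : 0 < ε := by rw [hε]; linarith
  obtain ⟨N, hN⟩ := exists_nat_one_div_lt (K := ℝ) hεpos
  have hev : ∀ᶠ n in Filter.atTop, U n y - U n x₀
      ≤ (U n x - U n x₀) + ((c x y + critValue c) + ε) := by
    filter_upwards [Filter.eventually_ge_atTop N] with n hn
    have h1 : (1 : ℝ) / (n + 1) ≤ 1 / (N + 1) := by
      apply div_le_div_of_nonneg_left one_pos.le (by positivity)
      have : (N : ℝ) ≤ n := Nat.cast_le.mpr hn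
      linarith
    have h2 := hstep n x y
    linarith [h1.trans hN.le]
  have hcob2 : Filter.IsCoboundedUnder (· ≥ ·) Filter.atTop
      (fun n => (U n x - U n x₀) + ((c x y + critValue c) + ε)) :=
    Filter.IsBoundedUnder.isCoboundedUnder_ge
      (Filter.isBoundedUnder_of ⟨c x₀ x + critValue c + 1 + ((c x y + critValue c) + ε),
        fun n => add_le_add_left (hub n x) _⟩)
  have hle : Filter.liminf (fun n => U n y - U n x₀) Filter.atTop
      ≤ Filter.liminf (fun n => (U n x - U n x₀) + ((c x y + critValue c) + ε))
        Filter.atTop :=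
    Filter.liminf_le_liminf hev (hbddb y) hcob2
  rw [liminf_add_const Filter.atTop (fun n => U n x - U n x₀)
    ((c x y + critValue c) + ε) (hcob x) (hbddb x)] at hle
  rw [hε] at hle
  linarith

end ManeAux

theorem mane_potential_basic_properties {X : Type*} [MetricSpace X] [Nonempty X] [ProperSpace X]
    {B K : ℝ} (hB : 1 ≤ B) (hK : 0 < K) (hlen : IsBLengthSpaceAtScale X B K)
    {c : X → X → ℝ} (hcont : Continuous fun q : X × X => c q.1 q.2)
    (hsl : UniformlySuperlinear c) (hub : UniformlyBounded c) :
    (∀ x y : X, mane c x y ≤ c x y + critValue c) ∧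
    (∀ x : X, mane c x x = 0) ∧
    (∀ u : X → ℝ, Dominated c (critValue c) u ↔ ∀ x y : X, u y - u x ≤ mane c x y) ∧
    (∀ x y z : X, mane c x z ≤ mane c x y + mane c y z) := by
  obtain ⟨u₀, hu₀⟩ := exists_dominated_critValue (c := c) hsl
  have hSne : ∀ x y : X,
      {r : ℝ | ∃ u : X → ℝ, Dominated c (critValue c) u ∧ r = u y - u x}.Nonempty :=
    fun x y => ⟨u₀ y - u₀ x, u₀, hu₀, rfl⟩
  have hSbdd : ∀ x y : X, ∀ r ∈
      {r : ℝ | ∃ u : X → ℝ, Dominated c (critValue c) u ∧ r = u y - u x},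
      r ≤ c x y + critValue c := by
    rintro x y r ⟨u, hu, rfl⟩
    exact hu x y
  have h1 : ∀ x y : X, mane c x y ≤ c x y + critValue c :=
    fun x y => csSup_le (hSne x y) (hSbdd x y)
  have hbdd : ∀ x y : X, BddAbove
      {r : ℝ | ∃ u : X → ℝ, Dominated c (critValue c) u ∧ r = u y - u x} :=
    fun x y => ⟨c x y + critValue c, hSbdd x y⟩
  have h3f : ∀ (u : X → ℝ), Dominated c (critValue c) u →
      ∀ x y : X, u y - u x ≤ mane c x y :=
    fun u hu x y => le_csSup (hbdd x y) ⟨u, hu, rfl⟩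
  refine ⟨h1, ?_, ?_, ?_⟩
  · intro x
    refine le_antisymm (csSup_le (hSne x x) ?_) ?_
    · rintro r ⟨u, hu, rfl⟩
      simp
    · have : (0 : ℝ) = u₀ x - u₀ x := by ring
      exact le_csSup (hbdd x x) ⟨u₀, hu₀, this⟩
  · intro u
    constructor
    · exact fun hu x y => h3f u hu x y
    · intro h x y
      exact (h x y).trans (h1 x y)
  · intro x y z
    refine csSup_le (hSne x z) ?_
    rintro r ⟨u, hu, rfl⟩
    have hxy : u y - u x ≤ mane c x y := h3f u hu x y
    have hyz : u z - u y ≤ mane c y z := h3f u hu y z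
    linarith
end

section
/- For every x ∈ X, the function φ_x = φ(x,·) is a critical sub-solution; for every y ≠ x one has φ_x(y) = T⁻φ_x(y) + α[0]; consequently φ_x is lower semi-continuous on X and continuous on X ∖ {x}. -/
open Metric Set Filter Topology

-- auxiliary lemmas

def vset {X : Type*} (c : X → X → ℝ) (α : ℝ) (x y : X) : Set ℝ :=
  {r | ∃ (n : ℕ) (p : ℕ → X), 1 ≤ n ∧ p 0 = x ∧ p n = y ∧
    r = (∑ i ∈ Finset.range n, c (p i) (p (i+1))) + n * α}

lemma tele {X : Type*} {c : X → X → ℝ} {a : ℝ} {u : X → ℝ} (hu : Dominated c a u)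
    (p : ℕ → X) (n : ℕ) :
    u (p n) - u (p 0) ≤ (∑ i ∈ Finset.range n, c (p i) (p (i+1))) + n * a := by
  induction n with
  | zero => simp
  | succ n ih =>
      have h := hu (p n) (p (n+1))
      rw [Finset.sum_range_succ]
      push_cast
      linarith

lemma vset_single {X : Type*} (c : X → X → ℝ) (α : ℝ) (x y : X) :
    c x y + α ∈ vset c α x y := by
  refine ⟨1, fun i => if i = 0 then x else y, le_refl 1, by simp, by simp, ?_⟩
  simp

lemma vset_append {X : Type*} {c : X → X → ℝ} {α : ℝ} {x y : X} {r : ℝ}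
    (hr : r ∈ vset c α x y) (z : X) : r + c y z + α ∈ vset c α x z := by
  obtain ⟨n, p, hn, hp0, hpn, hsum⟩ := hr
  refine ⟨n + 1, fun i => if i ≤ n then p i else z, by omega, by simp [hp0], by simp, ?_⟩
  rw [Finset.sum_range_succ]
  have h1 : ∀ i ∈ Finset.range n, c (if i ≤ n then p i else z) (if i + 1 ≤ n then p (i+1) else z)
      = c (p i) (p (i+1)) := by
    intro i hi
    simp only [Finset.mem_range] at hi
    rw [if_pos (by omega), if_pos (by omega)]
  rw [Finset.sum_congr rfl h1]
  simp only [le_refl, if_pos, Nat.not_succ_le_self, if_neg, hpn]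
  push_cast
  linarith [hsum]


lemma chainBound {X : Type*} [MetricSpace X] (g : X → ℝ) {E K : ℝ} (hE : 0 ≤ E) (hK : 0 < K)
    (hstep : ∀ a b : X, dist a b ≤ K → g b - g a ≤ E) :
    ∀ n (p : ℕ → X), (∀ i < n, dist (p i) (p (i+1)) ≤ K) →
      g (p n) - g (p 0) ≤ (2 * (∑ i ∈ Finset.range n, dist (p i) (p (i+1))) / K + 1) * E := by
  intro n
  induction n using Nat.strong_induction_on with
  | _ n ih =>
    intro p hp
    match n with
    | 0 =>
        simp only [Finset.range_zero, Finset.sum_empty, sub_self, mul_zero, zero_div, zero_add,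
          one_mul]
        exact hE
    | 1 =>
        have h := hstep (p 0) (p 1) (hp 0 (by omega))
        have hd : (0:ℝ) ≤ 2 * dist (p 0) (p 1) / K := by positivity
        simp only [Finset.sum_range_one]
        show g (p 1) - g (p 0) ≤ (2 * dist (p 0) (p (0+1)) / K + 1) * E
        nlinarith
    | (m+2) =>
        set S := ∑ i ∈ Finset.range (m+2), dist (p i) (p (i+1)) with hS
        have hd01 : 0 ≤ dist (p 0) (p 1) := dist_nonneg
        have hd12 : 0 ≤ dist (p 1) (p 2) := dist_nonneg
        have hsplit : S = dist (p 0) (p 1) + dist (p 1) (p 2)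
            + ∑ i ∈ Finset.range m, dist (p (i+2)) (p (i+3)) := by
          rw [hS, Finset.sum_range_succ', Finset.sum_range_succ']
          have he : ∀ i ∈ Finset.range m,
              dist (p (i+1+1)) (p (i+1+1+1)) = dist (p (i+2)) (p (i+3)) := by
            intro i _; norm_num
          rw [Finset.sum_congr rfl he]
          norm_num
          ring
        by_cases hc : dist (p 0) (p 2) ≤ K
        · -- merge first two steps
          set q : ℕ → X := fun i => if i = 0 then p 0 else p (i+1) with hq
          have hq0 : q 0 = p 0 := by simp [hq]
          have hqn : q (m+1) = p (m+2) := by simp [hq]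
          have hqs : ∀ i < m+1, dist (q i) (q (i+1)) ≤ K := by
            intro i hi
            match i with
            | 0 => simpa [hq] using hc
            | (j+1) => simpa [hq] using hp (j+2) (by omega)
          have hsum : ∑ i ∈ Finset.range (m+1), dist (q i) (q (i+1)) ≤ S := by
            rw [Finset.sum_range_succ']
            have he : ∀ i ∈ Finset.range m,
                dist (q (i+1)) (q (i+1+1)) = dist (p (i+2)) (p (i+3)) := by
              intro i _; simp [hq]
            rw [Finset.sum_congr rfl he]
            have h2 : dist (q 0) (q (0+1)) = dist (p 0) (p 2) := by simp [hq]
            rw [h2, hsplit]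
            have := dist_triangle (p 0) (p 1) (p 2)
            linarith
          have hih := ih (m+1) (by omega) q hqs
          rw [hq0, hqn] at hih
          calc g (p (m+2)) - g (p 0)
              ≤ (2 * (∑ i ∈ Finset.range (m+1), dist (q i) (q (i+1))) / K + 1) * E := hih
            _ ≤ (2 * S / K + 1) * E := by gcongr
        · -- first two steps total > K; peel them off
          push_neg at hc
          set q : ℕ → X := fun i => p (i+2) with hq
          have hqs : ∀ i < m, dist (q i) (q (i+1)) ≤ K := by
            intro i hi; simpa [hq] using hp (i+2) (by omega)
          have hihm := ih m (by omega) q hqs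
          have hq0 : q 0 = p 2 := by simp [hq]
          have hqm : q m = p (m+2) := by simp [hq]
          rw [hq0, hqm] at hihm
          have hstep1 := hstep (p 0) (p 1) (hp 0 (by omega))
          have hstep2 := hstep (p 1) (p 2) (hp 1 (by omega))
          have hKle : K ≤ dist (p 0) (p 1) + dist (p 1) (p 2) :=
            le_trans (le_of_lt hc) (dist_triangle _ _ _)
          have hqsum : ∑ i ∈ Finset.range m, dist (q i) (q (i+1))
              = ∑ i ∈ Finset.range m, dist (p (i+2)) (p (i+3)) := by
            apply Finset.sum_congr rfl; intro i _; simp [hq]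
          have hS'' : ∑ i ∈ Finset.range m, dist (q i) (q (i+1)) ≤ S - K := by
            rw [hqsum]; linarith [hsplit.le]
          have hS''nn : (0:ℝ) ≤ ∑ i ∈ Finset.range m, dist (q i) (q (i+1)) :=
            Finset.sum_nonneg fun i _ => dist_nonneg
          have hfrac : 2 * (∑ i ∈ Finset.range m, dist (q i) (q (i+1))) / K + 3 ≤ 2 * S / K + 1 := by
            rw [div_add' _ _ _ (ne_of_gt hK), div_add' _ _ _ (ne_of_gt hK),
              div_le_div_iff₀ hK hK]
            nlinarith
          calc g (p (m+2)) - g (p 0)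
              = (g (p (m+2)) - g (p 2)) + (g (p 2) - g (p 1)) + (g (p 1) - g (p 0)) := by ring
            _ ≤ (2 * (∑ i ∈ Finset.range m, dist (q i) (q (i+1))) / K + 1) * E + E + E := by
                linarith
            _ = (2 * (∑ i ∈ Finset.range m, dist (q i) (q (i+1))) / K + 3) * E := by ring
            _ ≤ (2 * S / K + 1) * E := mul_le_mul_of_nonneg_right hfrac hE


theorem mane_potential_is_subsolution {X : Type*} [MetricSpace X] [Nonempty X] [ProperSpace X]
    {B K : ℝ} (hB : 1 ≤ B) (hK : 0 < K) (hlen : IsBLengthSpaceAtScale X B K)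
    {c : X → X → ℝ} (hcont : Continuous fun q : X × X => c q.1 q.2)
    (hsl : UniformlySuperlinear c) (hub : UniformlyBounded c) (x : X) :
    Dominated c (critValue c) (mane c x) ∧
    (∀ y : X, y ≠ x → mane c x y = Tm c (mane c x) y + critValue c) ∧
    LowerSemicontinuous (mane c x) ∧
    ContinuousOn (mane c x) {x}ᶜ := by
  classical
  obtain ⟨C0, hC0⟩ := hsl 0 le_rfl
  have hC0' : ∀ a b : X, -C0 ≤ c a b := by intro a b; have := hC0 a b; simpa using this
  set Sset : Set ℝ := {α : ℝ | ∃ u : X → ℝ, Dominated c α u} with hSset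
  have hcv : critValue c = sInf Sset := rfl
  have hSne : Sset.Nonempty := ⟨C0, fun _ => 0, fun a b => by have := hC0' a b; simp; linarith⟩
  have hSbb : BddBelow Sset := by
    refine ⟨-c x x, ?_⟩
    rintro α ⟨u, hu⟩
    have := hu x x
    linarith
  have hdomgt : ∀ a, critValue c < a → ∃ u : X → ℝ, Dominated c a u := by
    intro a ha
    obtain ⟨α, hα, hlt⟩ := exists_lt_of_csInf_lt hSne (hcv ▸ ha)
    obtain ⟨u, hu⟩ := hα
    exact ⟨u, fun p q => le_trans (hu p q) (by linarith)⟩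
  -- lower bound for chain values
  have hvlb : ∀ y : X, ∀ r ∈ vset c (critValue c) x y, -c y x - critValue c ≤ r := by
    rintro y r ⟨n, p, hn, hp0, hpn, hr⟩
    apply le_of_forall_pos_le_add
    intro ε hε
    have hn1 : (0:ℝ) < (n:ℝ) + 1 := by positivity
    set d : ℝ := ε / (2 * ((n:ℝ) + 1)) with hd
    have hdpos : 0 < d := by positivity
    set a : ℝ := critValue c + d with ha
    obtain ⟨u, hu⟩ := hdomgt a (by linarith)
    have htel := tele hu p n
    rw [hp0, hpn] at htel
    have hdxy := hu y x
    have hna : (n:ℝ) * a = (n:ℝ) * critValue c + (n:ℝ) * d := by rw [ha]; ring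
    have hfrac1 : (n:ℝ) * d ≤ ε / 2 := by
      have h1 : (n:ℝ) * d ≤ ((n:ℝ)+1) * d := by nlinarith
      have h2 : ((n:ℝ)+1) * d = ε / 2 := by rw [hd]; field_simp
      linarith
    have hfrac2 : d ≤ ε / 2 := by
      rw [hd, div_le_div_iff₀ (by positivity) (by norm_num)]
      nlinarith
    rw [hr]
    linarith
  have hVne : ∀ y : X, (vset c (critValue c) x y).Nonempty :=
    fun y => ⟨_, vset_single c (critValue c) x y⟩
  have hVbb : ∀ y : X, BddBelow (vset c (critValue c) x y) :=
    fun y => ⟨-c y x - critValue c, fun r hr => hvlb y r hr⟩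
  set V : X → ℝ := fun y => sInf (vset c (critValue c) x y) with hVdef
  have hVle : ∀ y, V y ≤ c x y + critValue c := fun y => csInf_le (hVbb y) (vset_single _ _ _ _)
  have hVlb : ∀ y, -c y x - critValue c ≤ V y := fun y => le_csInf (hVne y) (hvlb y)
  have hVdom : ∀ y z : X, V z - V y ≤ c y z + critValue c := by
    intro y z
    have h1 : ∀ r ∈ vset c (critValue c) x y, V z - (c y z + critValue c) ≤ r := by
      intro r hr
      have := csInf_le (hVbb z) (vset_append hr z)
      linarith
    have := le_csInf (hVne y) h1
    linarith
  set u₀ : X → ℝ := fun y => if y = x then 0 else V y with hu₀def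
  have hu₀x : u₀ x = 0 := by simp [hu₀def]
  have hu₀ne : ∀ y, y ≠ x → u₀ y = V y := by intro y hy; simp [hu₀def, hy]
  have hu0dom : Dominated c (critValue c) u₀ := by
    intro y z
    by_cases hy : y = x <;> by_cases hz : z = x
    · rw [hy, hz, hu₀x]
      have := hVdom x x
      linarith
    · rw [hy, hu₀x, hu₀ne z hz]
      have := hVle z
      linarith
    · rw [hz, hu₀x, hu₀ne y hy]
      have := hVlb y
      linarith
    · rw [hu₀ne y hy, hu₀ne z hz]
      exact hVdom y z
  have hVx : 0 ≤ V x := by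
    apply le_csInf (hVne x)
    rintro r ⟨n, p, hn, hp0, hpn, hr⟩
    have := tele hu0dom p n
    rw [hp0, hpn, hu₀x] at this
    rw [hr]; linarith
  have hu₀leV : ∀ y, u₀ y ≤ V y := by
    intro y
    by_cases hy : y = x
    · subst hy; rw [hu₀x]; exact hVx
    · rw [hu₀ne y hy]
  have hcrit_le : ∀ (u : X → ℝ), Dominated c (critValue c) u → ∀ y, u y - u x ≤ u₀ y := by
    intro u hu y
    by_cases hy : y = x
    · subst hy; rw [hu₀x]; simp
    · rw [hu₀ne y hy]
      apply le_csInf (hVne y)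
      rintro r ⟨n, p, hn, hp0, hpn, hr⟩
      have := tele hu p n
      rw [hp0, hpn] at this
      rw [hr]; linarith
  have hmane : mane c x = u₀ := by
    funext y
    have hne : ∃ r, r ∈ {r : ℝ | ∃ u : X → ℝ, Dominated c (critValue c) u ∧ r = u y - u x} :=
      ⟨u₀ y - u₀ x, u₀, hu0dom, rfl⟩
    have hba : ∀ r ∈ {r : ℝ | ∃ u : X → ℝ, Dominated c (critValue c) u ∧ r = u y - u x},
        r ≤ u₀ y := by rintro r ⟨u, hu, rfl⟩; exact hcrit_le u hu y
    apply le_antisymm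
    · exact csSup_le hne hba
    · have : u₀ y - u₀ x ≤ sSup {r : ℝ | ∃ u : X → ℝ, Dominated c (critValue c) u ∧ r = u y - u x} :=
        le_csSup ⟨u₀ y, hba⟩ ⟨u₀, hu0dom, rfl⟩
      rw [hu₀x] at this
      show u₀ y ≤ sSup {r : ℝ | ∃ u : X → ℝ, Dominated c (critValue c) u ∧ r = u y - u x}
      linarith
  -- bddBelow of the Tm family
  have hTmbb : ∀ y : X, BddBelow (Set.range fun z => u₀ z + c z y) := by
    intro y
    refine ⟨u₀ y - critValue c, ?_⟩
    rintro r ⟨z, rfl⟩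
    have := hu0dom z y
    simp only [mem_Ici]
    linarith
  have key2 : ∀ y : X, y ≠ x → u₀ y = (⨅ z, u₀ z + c z y) + critValue c := by
    intro y hy
    have le1 : u₀ y - critValue c ≤ ⨅ z, u₀ z + c z y := by
      apply le_ciInf
      intro z
      have := hu0dom z y
      linarith
    have le2 : (⨅ z, u₀ z + c z y) + critValue c ≤ u₀ y := by
      rw [hu₀ne y hy]
      apply le_csInf (hVne y)
      rintro r ⟨n, p, hn, hp0, hpn, hr⟩
      obtain ⟨k, rfl⟩ : ∃ k, n = k + 1 := ⟨n - 1, by omega⟩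
      have hsplit : r = ((∑ i ∈ Finset.range k, c (p i) (p (i+1))) + k * critValue c)
          + c (p k) (p (k+1)) + critValue c := by
        rw [hr, Finset.sum_range_succ]; push_cast; ring
      have hinf : (⨅ z, u₀ z + c z y) ≤ u₀ (p k) + c (p k) y := ciInf_le (hTmbb y) (p k)
      by_cases hk : k = 0
      · subst hk
        have hr' : r = c x y + critValue c := by
          rw [hr, Finset.sum_range_one, hp0, hpn]
          push_cast; ring
        have hinf2 : (⨅ z, u₀ z + c z y) ≤ u₀ x + c x y := ciInf_le (hTmbb y) x
        rw [hu₀x] at hinf2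
        rw [hr']
        linarith
      · have hmem : (∑ i ∈ Finset.range k, c (p i) (p (i+1))) + k * critValue c
            ∈ vset c (critValue c) x (p k) := ⟨k, p, by omega, hp0, rfl, rfl⟩
        have hVk : V (p k) ≤ (∑ i ∈ Finset.range k, c (p i) (p (i+1))) + k * critValue c :=
          csInf_le (hVbb _) hmem
        have := hu₀leV (p k)
        rw [hpn] at hsplit
        rw [hsplit]
        linarith
    linarith
  -- lower Lipschitz-type bound along length structure
  obtain ⟨AK, hAK⟩ := hub K
  set E : ℝ := max (AK + critValue c) 0 with hE
  have hE0 : 0 ≤ E := le_max_right _ _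
  have hstep : ∀ a b : X, dist a b ≤ K → u₀ b - u₀ a ≤ E := by
    intro a b h
    have h1 := hu0dom a b
    have h2 := hAK a b h
    have : u₀ b - u₀ a ≤ AK + critValue c := by linarith
    exact le_trans this (le_max_left _ _)
  set L : ℝ := 2 * B * E / K with hL
  have hL0 : 0 ≤ L := by
    rw [hL]
    have hB0 : (0:ℝ) ≤ B := by linarith
    positivity
  have hlow : ∀ w : X, -(L * dist w x) - E ≤ u₀ w := by
    intro w
    obtain ⟨n, p, hp0, hpn, hstepK, hsum⟩ := hlen w x
    have hcb := chainBound u₀ hE0 hK hstep n p hstepK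
    rw [hp0, hpn, hu₀x] at hcb
    have hd0 : 0 ≤ dist w x := dist_nonneg
    have h1 : (2 * (∑ i ∈ Finset.range n, dist (p i) (p (i+1))) / K + 1) * E
        ≤ (2 * (B * dist w x) / K + 1) * E := by gcongr
    have h2 : (2 * (B * dist w x) / K + 1) * E = L * dist w x + E := by
      rw [hL]; field_simp
    linarith
  obtain ⟨C1, hC1⟩ := hsl (L + 1) (by linarith)
  -- lower semicontinuity
  have hLSC : LowerSemicontinuous u₀ := by
    intro y t ht
    set ε : ℝ := (u₀ y - t) / 2 with hεdef
    have hε : 0 < ε := by rw [hεdef]; linarith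
    set R : ℝ := max (|u₀ y| + |critValue c| + L * dist x y + E + (L + 1) + C1 + 1) 1 with hR
    have hR1 : |u₀ y| + |critValue c| + L * dist x y + E + (L + 1) + C1 + 1 ≤ R :=
      le_max_left _ _
    have far : ∀ w z : X, dist z y ≤ 1 → R ≤ dist w y →
        u₀ y - ε ≤ u₀ w + c w z + critValue c := by
      intro w z hz hw
      have h1 := hlow w
      have h2 := hC1 w z
      have t1 : dist w x ≤ dist w y + dist x y := by
        rw [dist_comm x y]; exact dist_triangle w y x
      have hm1 : L * dist w x ≤ L * dist w y + L * dist x y := by nlinarith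
      have t2 : dist w y - 1 ≤ dist w z := by
        have := dist_triangle w z y; linarith
      have hm2 : L * dist w y + dist w y - (L + 1) ≤ (L + 1) * dist w z := by nlinarith
      have h3 : u₀ y ≤ |u₀ y| := le_abs_self _
      have h4 : -|critValue c| ≤ critValue c := neg_abs_le _
      linarith
    obtain ⟨δ₀, hδ₀, hδ⟩ := Metric.uniformContinuousOn_iff.1
      (((isCompact_closedBall y R).prod (isCompact_closedBall y 1)).uniformContinuousOn_of_continuous
        hcont.continuousOn) ε hε
    have hδ'pos : 0 < (if y = x then min δ₀ 1 else min (min δ₀ 1) (dist x y)) := by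
      by_cases hyx : y = x
      · rw [if_pos hyx]; exact lt_min hδ₀ one_pos
      · rw [if_neg hyx]
        exact lt_min (lt_min hδ₀ one_pos) (dist_pos.2 (Ne.symm hyx))
    filter_upwards [Metric.ball_mem_nhds y hδ'pos] with z hz
    rw [mem_ball] at hz
    have hz1 : dist z y ≤ 1 := by
      have : dist z y < min δ₀ 1 := lt_of_lt_of_le hz (by split <;> simp)
      have := lt_min_iff.1 this
      linarith [this.2]
    have hzδ : dist z y < δ₀ := by
      have : dist z y < min δ₀ 1 := lt_of_lt_of_le hz (by split <;> simp)
      exact (lt_min_iff.1 this).1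
    by_cases hzx : z = x
    · by_cases hyx : y = x
      · rw [hzx, ← hyx]; exact ht
      · exfalso
        rw [if_neg hyx] at hz
        have h' : dist z y < dist x y := lt_of_lt_of_le hz (min_le_right _ _)
        rw [hzx] at h'
        exact lt_irrefl _ h'
    · have hall : ∀ w, u₀ y - ε ≤ u₀ w + c w z + critValue c := by
        intro w
        by_cases hw : dist w y ≤ R
        · have hmemw : w ∈ closedBall y R := by rwa [mem_closedBall]
          have hmemz : z ∈ closedBall y 1 := by rwa [mem_closedBall]
          have hmemy : y ∈ closedBall y 1 := mem_closedBall_self (by norm_num)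
          have hpair : dist ((w, z) : X × X) (w, y) < δ₀ := by
            rw [Prod.dist_eq]
            simp only [dist_self]
            rw [max_eq_right dist_nonneg]
            exact hzδ
          have := hδ (w, z) (mk_mem_prod hmemw hmemz) (w, y) (mk_mem_prod hmemw hmemy) hpair
          rw [Real.dist_eq, abs_lt] at this
          have hdom := hu0dom w y
          linarith [this.1, this.2]
        · exact far w z hz1 (le_of_not_ge hw)
      have hzeq := key2 z hzx
      have : u₀ y - ε - critValue c ≤ ⨅ w, u₀ w + c w z := by
        apply le_ciInf
        intro w
        have := hall w
        linarith
      rw [hεdef] at *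
      linarith [hzeq.ge, hzeq.le, this]
  refine ⟨?_, ?_, ?_, ?_⟩
  · rw [hmane]; exact hu0dom
  · intro y hy
    rw [hmane]
    have hTm : Tm c u₀ y = ⨅ z, u₀ z + c z y := rfl
    rw [hTm]
    exact key2 y hy
  · rw [hmane]; exact hLSC
  · rw [hmane]
    intro y hy
    rw [Set.mem_compl_singleton_iff] at hy
    apply ContinuousAt.continuousWithinAt
    have htends : Tendsto u₀ (𝓝 y) (𝓝 (u₀ y)) := by
      rw [Metric.tendsto_nhds]
      intro ε hε
      have hl : ∀ᶠ z in 𝓝 y, u₀ y - ε/2 < u₀ z := hLSC y (u₀ y - ε/2) (by linarith)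
      have hεα : (⨅ z, u₀ z + c z y) < (⨅ z, u₀ z + c z y) + ε/2 := by linarith
      obtain ⟨w, hw⟩ := exists_lt_of_ciInf_lt hεα
      have hkey := key2 y hy
      have hcw : Continuous fun z : X => c w z := by
        have hh : Continuous fun z : X => ((w, z) : X × X) := continuous_const.prodMk continuous_id
        exact hcont.comp hh
      have htd : Tendsto (fun z => c w z) (𝓝 y) (𝓝 (c w y)) := hcw.continuousAt
      have hup0 : ∀ᶠ z in 𝓝 y, c w z < c w y + ε/2 :=
        htd.eventually_lt_const (by linarith)
      filter_upwards [hl, hup0] with z h1 h2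
      rw [Real.dist_eq, abs_lt]
      have hdz := hu0dom w z
      constructor
      · linarith
      · linarith [hw, hkey.le, hkey.ge]
    exact htends
end

section
/- If x ∈ X is a non-isolated point, then the function φ_x = φ(x,·) is continuous at x if and only if x belongs to the projected Aubry set A. -/
open Metric Set Filter Topology

namespace AubryProof
open scoped Classical
set_option linter.unusedSectionVars false

variable {X : Type*} [MetricSpace X]

noncomputable def chCost (c : X → X → ℝ) (p : ℕ → X) (n : ℕ) : ℝ :=
  ∑ i ∈ Finset.range n, c (p i) (p (i + 1))

lemma chCost_congr {c : X → X → ℝ} {p q : ℕ → X} {n : ℕ} (h : ∀ i ≤ n, p i = q i) :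
    chCost c p n = chCost c q n := by
  unfold chCost
  refine Finset.sum_congr rfl fun i hi => ?_
  simp only [Finset.mem_range] at hi
  rw [h i (by omega), h (i+1) (by omega)]

lemma chCost_append {c : X → X → ℝ} (p : ℕ → X) (n : ℕ) (z : X) :
    chCost c (fun i => if i = n + 1 then z else p i) (n + 1) = chCost c p n + c (p n) z := by
  unfold chCost
  rw [Finset.sum_range_succ]
  congr 1
  · refine Finset.sum_congr rfl fun i hi => ?_
    simp only [Finset.mem_range] at hi
    have h1 : i ≠ n+1 := by omega
    have h2 : i+1 ≠ n+1 := by omega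
    simp [h1, h2, show i ≠ n from by omega]
  · simp

lemma dominated_chain {c : X → X → ℝ} {α : ℝ} {u : X → ℝ} (hu : Dominated c α u)
    (p : ℕ → X) (n : ℕ) : u (p n) - u (p 0) ≤ chCost c p n + n * α := by
  induction n with
  | zero => simp [chCost]
  | succ k ih =>
    have h1 := hu (p k) (p (k+1))
    unfold chCost at *
    rw [Finset.sum_range_succ]
    push_cast
    linarith

lemma critSet_nonempty {c : X → X → ℝ} (hsl : UniformlySuperlinear c) :
    {α : ℝ | ∃ u : X → ℝ, Dominated c α u}.Nonempty := by
  obtain ⟨C, hC⟩ := hsl 0 le_rfl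
  exact ⟨C, fun _ : X => 0, fun x y => by have := hC x y; simp at this ⊢; linarith⟩

lemma critSet_bddBelow [Nonempty X] {c : X → X → ℝ} :
    BddBelow {α : ℝ | ∃ u : X → ℝ, Dominated c α u} := by
  obtain ⟨x₀⟩ := ‹Nonempty X›
  refine ⟨-c x₀ x₀, fun α ⟨u, hu⟩ => ?_⟩
  have := hu x₀ x₀
  simp only [sub_self] at this
  linarith

lemma exists_dominated_lt [Nonempty X] {c : X → X → ℝ} (hsl : UniformlySuperlinear c)
    {ε : ℝ} (hε : 0 < ε) : ∃ u : X → ℝ, Dominated c (critValue c + ε) u := by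
  have h := exists_lt_of_csInf_lt (critSet_nonempty hsl)
    (show critValue c < critValue c + ε by linarith)
  obtain ⟨α, ⟨u, hu⟩, hlt⟩ := h
  exact ⟨u, fun x y => le_trans (hu x y) (by linarith)⟩

lemma cycle_nonneg [Nonempty X] {c : X → X → ℝ} (hsl : UniformlySuperlinear c)
    {p : ℕ → X} {n : ℕ} (hp : p n = p 0) : 0 ≤ chCost c p n + n * critValue c := by
  have key : ∀ ε > 0, -((n : ℝ) * ε) ≤ chCost c p n + n * critValue c := by
    intro ε hε
    obtain ⟨u, hu⟩ := exists_dominated_lt hsl hε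
    have := dominated_chain hu p n
    rw [hp, sub_self] at this
    nlinarith [this]
  by_contra h
  push_neg at h
  rcases Nat.eq_zero_or_pos n with hn | hn
  · simp [hn, chCost] at h
  · have hn' : (0:ℝ) < n := by exact_mod_cast hn
    set t := chCost c p n + n * critValue c with ht
    have hε : 0 < -t / (2*n) := div_pos (by linarith) (by positivity)
    have h2 := key _ hε
    have h3 : (n:ℝ) * (-t / (2*n)) = -t/2 := by field_simp
    rw [h3] at h2
    linarith


variable [Nonempty X]

/-- The set of costs (plus `n α`) of chains of length `≥ 1` from `x` to `y`. -/
def mSet (c : X → X → ℝ) (x y : X) : Set ℝ :=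
  {r | ∃ n : ℕ, 1 ≤ n ∧ ∃ p : ℕ → X, p 0 = x ∧ p n = y ∧ r = chCost c p n + n * critValue c}

noncomputable def mPot (c : X → X → ℝ) (x y : X) : ℝ := sInf (mSet c x y)

lemma mSet_nonempty (c : X → X → ℝ) (x y : X) : (mSet c x y).Nonempty := by
  refine ⟨c x y + critValue c, 1, le_rfl, (fun i => if i = 0 then x else y), by simp, by simp, ?_⟩
  simp [chCost]

lemma mem_mSet_lb {c : X → X → ℝ} (hsl : UniformlySuperlinear c) {x y : X} {r : ℝ}
    (hr : r ∈ mSet c x y) : -(c y x + critValue c) ≤ r := by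
  obtain ⟨n, hn, p, h0, hnp, rfl⟩ := hr
  have := cycle_nonneg hsl (p := fun i => if i = n + 1 then x else p i) (n := n + 1)
    (by simp [h0])
  rw [chCost_append] at this
  rw [hnp] at this
  push_cast at this
  linarith

lemma mSet_bddBelow {c : X → X → ℝ} (hsl : UniformlySuperlinear c) (x y : X) :
    BddBelow (mSet c x y) := ⟨-(c y x + critValue c), fun _ hr => mem_mSet_lb hsl hr⟩

lemma mPot_le_mem {c : X → X → ℝ} (hsl : UniformlySuperlinear c) {x y : X} {r : ℝ}
    (hr : r ∈ mSet c x y) : mPot c x y ≤ r := csInf_le (mSet_bddBelow hsl x y) hr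

lemma mPot_le_cost {c : X → X → ℝ} (hsl : UniformlySuperlinear c) (x y : X) :
    mPot c x y ≤ c x y + critValue c := by
  refine mPot_le_mem hsl ⟨1, le_rfl, (fun i => if i = 0 then x else y), by simp, by simp, ?_⟩
  simp [chCost]

lemma mPot_lb {c : X → X → ℝ} (hsl : UniformlySuperlinear c) (x y : X) :
    -(c y x + critValue c) ≤ mPot c x y :=
  le_csInf (mSet_nonempty c x y) fun _ hr => mem_mSet_lb hsl hr

lemma mPot_self_nonneg {c : X → X → ℝ} (hsl : UniformlySuperlinear c) (x : X) :
    0 ≤ mPot c x x := by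
  refine le_csInf (mSet_nonempty c x x) fun r hr => ?_
  obtain ⟨n, hn, p, h0, hnp, rfl⟩ := hr
  exact cycle_nonneg hsl (by rw [hnp, h0])

lemma mem_mSet_concat {c : X → X → ℝ} {x y z : X} {r s : ℝ}
    (hr : r ∈ mSet c x y) (hs : s ∈ mSet c y z) : r + s ∈ mSet c x z := by
  obtain ⟨n, hn, p, hp0, hpn, rfl⟩ := hr
  obtain ⟨m, hm, q, hq0, hqm, rfl⟩ := hs
  refine ⟨n + m, by omega, (fun i => if i < n then p i else q (i - n)), ?_, ?_, ?_⟩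
  · have h0 : (0:ℕ) < n := by omega
    simp [h0, hp0]
  · have h : ¬ (n + m < n) := by omega
    simp [h, show n + m - n = m from by omega, hqm]
  · have hsplit : chCost c (fun i => if i < n then p i else q (i - n)) (n + m)
        = chCost c p n + chCost c q m := by
      unfold chCost
      rw [Finset.sum_range_add]
      congr 1
      · refine Finset.sum_congr rfl fun i hi => ?_
        simp only [Finset.mem_range] at hi
        rcases Nat.lt_or_ge (i+1) n with h | h
        · simp [hi, h]
        · have hth : i + 1 = n := by omega
          have hne : ¬ (i + 1 < n) := by omega
          have e1 : q (i+1-n) = p (i+1) := by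
            rw [show i+1-n = 0 from by omega, hq0, ← hpn, hth]
          simp [hi, hne, e1, show q 0 = p (i+1) from by rw [hq0, ← hpn, hth]]
      · refine Finset.sum_congr rfl fun i hi => ?_
        have h1 : ¬ (n + i < n) := by omega
        have h2 : ¬ (n + i + 1 < n) := by omega
        simp [h1, h2, show n + i - n = i from by omega, show n + i + 1 - n = i + 1 from by omega]
    rw [hsplit]
    push_cast
    ring

lemma mPot_triangle {c : X → X → ℝ} (hsl : UniformlySuperlinear c) (x y z : X) :
    mPot c x z ≤ mPot c x y + mPot c y z := by
  have h1 : ∀ s ∈ mSet c y z, ∀ r ∈ mSet c x y, mPot c x z ≤ r + s := fun s hs r hr =>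
    mPot_le_mem hsl (mem_mSet_concat hr hs)
  have h2 : ∀ s ∈ mSet c y z, mPot c x z - s ≤ mPot c x y := fun s hs =>
    le_csInf (mSet_nonempty c x y) (fun r hr => by have := h1 s hs r hr; linarith)
  have h3 : mPot c x z - mPot c x y ≤ mPot c y z :=
    le_csInf (mSet_nonempty c y z) (fun s hs => by have := h2 s hs; linarith)
  linarith

lemma dominated_le_mPot {c : X → X → ℝ} {u : X → ℝ} (hu : Dominated c (critValue c) u)
    (x y : X) : u y - u x ≤ mPot c x y := by
  refine le_csInf (mSet_nonempty c x y) fun r hr => ?_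
  obtain ⟨n, hn, p, hp0, hpn, rfl⟩ := hr
  have := dominated_chain hu p n
  rw [hp0, hpn] at this
  exact this

/-- `c x x + α ≥ 0`. -/
lemma cost_self_nonneg {c : X → X → ℝ} (hsl : UniformlySuperlinear c) (x : X) :
    0 ≤ c x x + critValue c := by
  have := cycle_nonneg hsl (c := c) (p := fun _ => x) (n := 1) rfl
  simpa [chCost] using this

noncomputable def vxFun (c : X → X → ℝ) (x : X) : X → ℝ :=
  fun z => if z = x then 0 else mPot c x z

noncomputable def wxFun (c : X → X → ℝ) (x : X) : X → ℝ :=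
  fun z => if z = x then 0 else -mPot c z x

lemma vx_dominated {c : X → X → ℝ} (hsl : UniformlySuperlinear c) (x : X) :
    Dominated c (critValue c) (vxFun c x) := by
  intro z z'
  unfold vxFun
  by_cases hz : z = x <;> by_cases hz' : z' = x <;> simp [hz, hz']
  · exact cost_self_nonneg hsl x
  · exact mPot_le_cost hsl x z'
  · linarith [mPot_self_nonneg hsl (c := c) x, mPot_triangle hsl (c := c) x z x,
      mPot_le_cost hsl (c := c) z x]
  · linarith [mPot_triangle hsl (c := c) x z z', mPot_le_cost hsl (c := c) z z']

lemma wx_dominated {c : X → X → ℝ} (hsl : UniformlySuperlinear c) (x : X) :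
    Dominated c (critValue c) (wxFun c x) := by
  intro z z'
  unfold wxFun
  by_cases hz : z = x <;> by_cases hz' : z' = x <;> simp [hz, hz']
  · exact cost_self_nonneg hsl x
  · linarith [mPot_self_nonneg hsl (c := c) x, mPot_triangle hsl (c := c) x z' x,
      mPot_le_cost hsl (c := c) x z']
  · linarith [mPot_le_cost hsl (c := c) z x]
  · linarith [mPot_triangle hsl (c := c) z z' x, mPot_le_cost hsl (c := c) z z']

section maneL
variable {c : X → X → ℝ}

lemma maneSet_bddAbove (hsl : UniformlySuperlinear c) (x y : X) :
    BddAbove {r : ℝ | ∃ u : X → ℝ, Dominated c (critValue c) u ∧ r = u y - u x} := by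
  refine ⟨mPot c x y, fun r ⟨u, hu, hr⟩ => ?_⟩
  rw [hr]; exact dominated_le_mPot hu x y

lemma mane_le_mPot (hsl : UniformlySuperlinear c)
    (hex : ∃ u : X → ℝ, Dominated c (critValue c) u) (x y : X) :
    mane c x y ≤ mPot c x y := by
  obtain ⟨u, hu⟩ := hex
  exact csSup_le ⟨u y - u x, u, hu, rfl⟩ (fun r ⟨v, hv, hr⟩ => hr ▸ dominated_le_mPot hv x y)

lemma mane_self (hex : ∃ u : X → ℝ, Dominated c (critValue c) u) (x : X) :
    mane c x x = 0 := by
  obtain ⟨u, hu⟩ := hex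
  have : {r : ℝ | ∃ u : X → ℝ, Dominated c (critValue c) u ∧ r = u x - u x} = {0} := by
    ext r
    constructor
    · rintro ⟨v, hv, rfl⟩; simp
    · rintro rfl; exact ⟨u, hu, by simp⟩
  rw [mane, this, csSup_singleton]

lemma mPot_le_mane (hsl : UniformlySuperlinear c) {x y : X} (hxy : y ≠ x) :
    mPot c x y ≤ mane c x y := by
  have hmem : mPot c x y ∈ {r : ℝ | ∃ u : X → ℝ, Dominated c (critValue c) u ∧ r = u y - u x} := by
    refine ⟨vxFun c x, vx_dominated hsl x, ?_⟩
    unfold vxFun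
    simp [hxy]
  exact le_csSup (maneSet_bddAbove hsl x y) hmem

lemma neg_mPot_le_mane (hsl : UniformlySuperlinear c) (x y : X) :
    -mPot c y x ≤ mane c x y := by
  by_cases hxy : y = x
  · subst hxy
    have h0 : (0:ℝ) ∈ {r : ℝ | ∃ u : X → ℝ, Dominated c (critValue c) u ∧ r = u y - u y} :=
      ⟨vxFun c y, vx_dominated hsl y, by simp⟩
    have := le_csSup (maneSet_bddAbove hsl y y) h0
    have h1 := mPot_self_nonneg hsl (c := c) y
    rw [mane]
    linarith
  · have hmem : -mPot c y x ∈ {r : ℝ | ∃ u : X → ℝ, Dominated c (critValue c) u ∧ r = u y - u x} := by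
      refine ⟨wxFun c x, wx_dominated hsl x, ?_⟩
      unfold wxFun
      simp [hxy]
    exact le_csSup (maneSet_bddAbove hsl x y) hmem

end maneL

lemma dominated_linear_growth {c : X → X → ℝ} {B K : ℝ} (hB : 1 ≤ B) (hK : 0 < K)
    (hlen : IsBLengthSpaceAtScale X B K) (hub : UniformlyBounded c) :
    ∃ L M : ℝ, 0 ≤ L ∧ 0 ≤ M ∧ ∀ u : X → ℝ, Dominated c (critValue c) u →
      ∀ p q : X, u q - u p ≤ L * dist p q + M := by
  obtain ⟨A2, hA2⟩ := hub (2 * K)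
  set S : ℝ := max (A2 + critValue c) 0 with hS
  have hS0 : 0 ≤ S := le_max_right _ _
  have hstep : ∀ u : X → ℝ, Dominated c (critValue c) u → ∀ a b : X, dist a b ≤ 2 * K →
      u b - u a ≤ S := by
    intro u hu a b hab
    calc u b - u a ≤ c a b + critValue c := hu a b
    _ ≤ A2 + critValue c := by linarith [hA2 a b hab]
    _ ≤ S := le_max_left _ _
  have key : ∀ u : X → ℝ, Dominated c (critValue c) u → ∀ n : ℕ, ∀ p : ℕ → X,
      (∀ i < n, dist (p i) (p (i+1)) ≤ K) →
      u (p n) - u (p 0) ≤ S + S * (∑ i ∈ Finset.range n, dist (p i) (p (i+1))) / K := by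
    intro u hu n
    induction n using Nat.strong_induction_on with
    | _ n ih =>
      intro p hp
      rcases Nat.eq_zero_or_pos n with rfl | hn
      · have hsum : (∑ i ∈ Finset.range 0, dist (p i) (p (i+1))) = 0 := by simp
        simp [hsum]
        positivity
      · set T : ℕ → ℝ := fun j => ∑ i ∈ Finset.range j, dist (p i) (p (i+1)) with hT
        have hgoal : (∑ i ∈ Finset.range n, dist (p i) (p (i+1))) = T n := rfl
        rw [hgoal]
        have hsum_nonneg : ∀ j, 0 ≤ T j := by
          intro j; apply Finset.sum_nonneg; intros; positivity
        set js : ℕ := Nat.findGreatest (fun j => T j ≤ K) n with hjs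
        have hjs_le : js ≤ n := Nat.findGreatest_le n
        have hP0 : T 0 ≤ K := by
          show (∑ i ∈ Finset.range 0, dist (p i) (p (i+1))) ≤ K
          simpa using hK.le
        have hjs_spec : T js ≤ K := by
          have := Nat.findGreatest_spec (P := fun j => T j ≤ K) (Nat.zero_le n) hP0
          exact this
        rcases eq_or_lt_of_le hjs_le with heq | hlt
        · -- js = n : single step
          have hd : dist (p 0) (p n) ≤ 2 * K := by
            have h1 : dist (p 0) (p n) ≤ T n := dist_le_range_sum_dist p n
            rw [heq] at hjs_spec
            linarith
          have := hstep u hu (p 0) (p n) hd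
          have h2 : 0 ≤ S * T n / K := by positivity
          linarith
        · -- js < n
          have hfg : Nat.findGreatest (fun j => T j ≤ K) n < js + 1 := by
            rw [← hjs]; omega
          have hnot0 := Nat.findGreatest_is_greatest (P := fun j => T j ≤ K) hfg (by omega)
          have hnot : K < T (js + 1) := by
            simp only [not_le] at hnot0; exact hnot0
          have hTsucc : T (js + 1) = T js + dist (p js) (p (js+1)) := by
            rw [hT]; exact Finset.sum_range_succ _ _
          have hd1 : dist (p 0) (p (js + 1)) ≤ 2 * K := by
            have h1 : dist (p 0) (p (js+1)) ≤ T (js + 1) := dist_le_range_sum_dist p (js+1)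
            have h2 : dist (p js) (p (js+1)) ≤ K := hp js (by omega)
            linarith
          have hfirst := hstep u hu (p 0) (p (js + 1)) hd1
          set m : ℕ := n - (js + 1) with hm
          have hnm : n = (js + 1) + m := by omega
          set q : ℕ → X := fun t => p (js + 1 + t) with hq
          have hqstep : ∀ i < m, dist (q i) (q (i+1)) ≤ K := by
            intro i hi
            have he : js + 1 + i + 1 = js + 1 + (i + 1) := by omega
            have := hp (js + 1 + i) (by omega)
            rw [he] at this
            exact this
          have hih := ih m (by omega) q hqstep
          have hqm : q m = p n := by rw [hq]; simp only; congr 1; omega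
          have hq0 : q 0 = p (js + 1) := by rw [hq]
          have hT2 : T n = T (js+1) + ∑ i ∈ Finset.range m, dist (p (js+1+i)) (p (js+1+i+1)) := by
            show (∑ i ∈ Finset.range n, dist (p i) (p (i+1)))
              = (∑ i ∈ Finset.range (js+1), dist (p i) (p (i+1))) + _
            rw [hnm, Finset.sum_range_add]
          have he : ∀ i, dist (q i) (q (i+1)) = dist (p (js+1+i)) (p (js+1+i+1)) := fun i => rfl
          have htail_sum : (∑ i ∈ Finset.range m, dist (q i) (q (i+1))) = T n - T (js + 1) := by
            simp only [he]
            linarith [hT2]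
          rw [hqm, hq0, htail_sum] at hih
          have hsub : T n - T (js+1) ≤ T n - K := by linarith
          have harith : S * (T n - T (js+1)) / K ≤ S * (T n - K) / K := by gcongr
          have hfin : S + S * (T n - K)/K = S * T n / K := by
            field_simp
            try ring
          linarith
  refine ⟨S * B / K, S, by positivity, hS0, fun u hu p q => ?_⟩
  obtain ⟨n, pa, h0, hn, hst, hlb⟩ := hlen p q
  have := key u hu n pa hst
  rw [h0, hn] at this
  have h2 : S * (∑ i ∈ Finset.range n, dist (pa i) (pa (i+1))) / K ≤ S * (B * dist p q) / K := by
    gcongr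
    try exact hlb
  have h3 : S * (B * dist p q) / K = S * B / K * dist p q := by ring
  linarith


lemma chCost_replace_last {c : X → X → ℝ} (p : ℕ → X) {n : ℕ} (hn : 1 ≤ n) (z : X) :
    chCost c (fun i => if i = n then z else p i) n = chCost c p (n-1) + c (p (n-1)) z := by
  obtain ⟨k, rfl⟩ : ∃ k, n = k + 1 := ⟨n-1, by omega⟩
  simpa using chCost_append p k z

lemma chCost_split_last {c : X → X → ℝ} (p : ℕ → X) {n : ℕ} (hn : 1 ≤ n) :
    chCost c p n = chCost c p (n-1) + c (p (n-1)) (p n) := by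
  obtain ⟨k, rfl⟩ : ∃ k, n = k + 1 := ⟨n-1, by omega⟩
  simpa [chCost] using Finset.sum_range_succ (fun i => c (p i) (p (i+1))) k

lemma chCost_tail {c : X → X → ℝ} (p : ℕ → X) {n : ℕ} (hn : 1 ≤ n) :
    chCost c p n = c (p 0) (p 1) + chCost c (fun t => p (1 + t)) (n - 1) := by
  obtain ⟨k, rfl⟩ : ∃ k, n = k + 1 := ⟨n-1, by omega⟩
  unfold chCost
  rw [Finset.sum_range_succ' (fun i => c (p i) (p (i+1))) k]
  simp only [Nat.add_sub_cancel]
  rw [add_comm]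
  congr 1
  refine Finset.sum_congr rfl fun i _ => ?_
  have h1 : 1 + i = i + 1 := by omega
  have h2 : 1 + (i + 1) = i + 1 + 1 := by omega
  rw [h1, h2]

lemma chCost_replace_first {c : X → X → ℝ} (p : ℕ → X) {n : ℕ} (hn : 1 ≤ n) (z : X) :
    chCost c (fun i => if i = 0 then z else p i) n + c (p 0) (p 1)
      = chCost c p n + c z (p 1) := by
  set q : ℕ → X := fun i => if i = 0 then z else p i with hqdef
  have hq1 : chCost c q n = c z (p 1) + chCost c (fun t => q (1 + t)) (n - 1) := by
    have h := chCost_tail (c := c) q hn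
    rw [h]
    have h0 : c (q 0) (q 1) = c z (p 1) := by rw [hqdef]; simp
    rw [h0]
  have hp1 : chCost c p n = c (p 0) (p 1) + chCost c (fun t => p (1 + t)) (n - 1) :=
    chCost_tail p hn
  have hqt : (fun t => q (1 + t)) = (fun t => p (1 + t)) := by
    funext t
    rw [hqdef]
    simp [show 1 + t ≠ 0 from by omega]
  rw [hq1, hqt, hp1]
  ring

section LSC
variable [ProperSpace X] {c : X → X → ℝ} {B K : ℝ}

lemma mPot_lsc_left (hcont : Continuous fun q : X × X => c q.1 q.2)
    (hsl : UniformlySuperlinear c) (hub : UniformlyBounded c)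
    (hB : 1 ≤ B) (hK : 0 < K) (hlen : IsBLengthSpaceAtScale X B K)
    (x z : X) {ε : ℝ} (hε : 0 < ε) :
    ∃ δ > 0, ∀ z' : X, dist z z' < δ → mPot c x z ≤ mPot c x z' + ε := by
  set α := critValue c with hα
  set ε₁ := min ε 1 with hε₁def
  have hε₁ : 0 < ε₁ := lt_min hε one_pos
  have hε₁le : ε₁ ≤ ε := min_le_left _ _
  have hε₁1 : ε₁ ≤ 1 := min_le_right _ _
  obtain ⟨L, M, hL0, hM0, hLM⟩ := dominated_linear_growth hB hK hlen hub
  obtain ⟨C, hC⟩ := hsl (L+1) (by linarith)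
  obtain ⟨A₁, hA₁⟩ := hub (dist x z + 1)
  have hQ : ∀ z' : X, dist z z' ≤ 1 → mPot c x z' ≤ A₁ + α := by
    intro z' hz'
    refine le_trans (mPot_le_cost hsl x z') ?_
    have h1 : dist x z' ≤ dist x z + 1 := by
      have := dist_triangle x z z'
      linarith
    linarith [hA₁ x z' h1]
  set R := A₁ + 2 + L * (dist x z + 1) + M + C with hR
  have hcomp : IsCompact ((closedBall z (R+2)) ×ˢ (closedBall z 1)) :=
    (isCompact_closedBall z (R+2)).prod (isCompact_closedBall z 1)
  have huc := hcomp.uniformContinuousOn_of_continuous hcont.continuousOn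
  rw [uniformContinuousOn_iff] at huc
  obtain ⟨δ', hδ'pos, hδ'⟩ := huc (ε₁/2) (by linarith)
  refine ⟨min δ' 1, lt_min hδ'pos one_pos, fun z' hz' => ?_⟩
  have hz1 : dist z z' ≤ 1 := le_of_lt (lt_of_lt_of_le hz' (min_le_right _ _))
  have hlt : mPot c x z' < mPot c x z' + ε₁/2 := by linarith
  obtain ⟨r, hrmem, hrlt⟩ := exists_lt_of_csInf_lt (mSet_nonempty c x z') hlt
  obtain ⟨n, hn, p, hp0, hpn, rfl⟩ := hrmem
  have hsplit := chCost_split_last (c := c) p hn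
  set u₀ : X → ℝ := vxFun c x with hu₀def
  have hu₀ : Dominated c α u₀ := vx_dominated hsl x
  have hfront : -(L * dist (p (n-1)) x + M) ≤ chCost c p (n-1) + ((n:ℝ)-1) * α := by
    have h1 := dominated_chain hu₀ p (n-1)
    have h2 := hLM u₀ hu₀ (p (n-1)) (p 0)
    rw [hp0] at h1 h2
    have hc : ((n-1 : ℕ):ℝ) = (n:ℝ) - 1 := by
      have h3 : 1 ≤ n := hn
      push_cast [h3]
      ring
    rw [hc] at h1
    linarith
  have hlast : (L+1) * dist (p (n-1)) z' - C ≤ c (p (n-1)) (p n) := by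
    rw [hpn]; exact hC (p (n-1)) z'
  have hαsplit : ((n:ℝ)-1) * α + α = (n:ℝ) * α := by ring
  have hrub : chCost c p n + (n:ℝ) * α < A₁ + α + 1 := by
    have h1 := hQ z' hz1
    have h05 : ε₁/2 ≤ 1 := by linarith
    linarith
  have hdb : dist (p (n-1)) z' ≤ R - 1 := by
    have htri : dist (p (n-1)) x ≤ dist (p (n-1)) z' + 1 + dist x z := by
      have h1 := dist_triangle (p (n-1)) z' x
      have h2 := dist_triangle z' z x
      have h3 : dist z' z = dist z z' := dist_comm _ _
      have h4 : dist z x = dist x z := dist_comm _ _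
      linarith
    have hLd := mul_le_mul_of_nonneg_left htri hL0
    have e1 : L * (dist (p (n-1)) z' + 1 + dist x z)
        = L * dist (p (n-1)) z' + L * (dist x z + 1) := by ring
    have e2 : (L+1) * dist (p (n-1)) z' = L * dist (p (n-1)) z' + dist (p (n-1)) z' := by ring
    have hLz : 0 ≤ L * dist (p (n-1)) z' := mul_nonneg hL0 dist_nonneg
    rw [hR]
    linarith [hfront, hlast, hrub, hsplit, hαsplit, hLd, e1, e2, hLz]
  have hmem1 : (p (n-1), z') ∈ (closedBall z (R+2)) ×ˢ (closedBall z 1) := by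
    constructor
    · rw [mem_closedBall]
      have := dist_triangle (p (n-1)) z' z
      have h3 : dist z' z = dist z z' := dist_comm _ _
      linarith
    · rw [mem_closedBall]
      rw [dist_comm]
      exact hz1
  have hmem2 : (p (n-1), z) ∈ (closedBall z (R+2)) ×ˢ (closedBall z 1) := by
    constructor
    · rw [mem_closedBall]
      have := dist_triangle (p (n-1)) z' z
      have h3 : dist z' z = dist z z' := dist_comm _ _
      linarith
    · simp [hε₁]
  have hpair : dist ((p (n-1), z') : X × X) (p (n-1), z) < δ' := by
    rw [Prod.dist_eq]
    simp only [dist_self]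
    have h4 : dist z' z < δ' := by
      rw [dist_comm]; exact lt_of_lt_of_le hz' (min_le_left _ _)
    exact max_lt hδ'pos h4
  have hcc := hδ' _ hmem1 _ hmem2 hpair
  simp only [Real.dist_eq] at hcc
  have habs := abs_lt.mp hcc
  have hmemq : chCost c p (n-1) + c (p (n-1)) z + (n:ℝ) * α ∈ mSet c x z := by
    refine ⟨n, hn, (fun i => if i = n then z else p i), ?_, by simp, ?_⟩
    · simp [show (0:ℕ) ≠ n from by omega, hp0]
    · rw [chCost_replace_last p hn z]
  have hfinal := mPot_le_mem hsl hmemq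
  rw [hsplit, hpn] at hrlt
  linarith [habs.2, hfinal, hrlt, hε₁le]

lemma mPot_lsc_right (hcont : Continuous fun q : X × X => c q.1 q.2)
    (hsl : UniformlySuperlinear c) (hub : UniformlyBounded c)
    (hB : 1 ≤ B) (hK : 0 < K) (hlen : IsBLengthSpaceAtScale X B K)
    (x z : X) {ε : ℝ} (hε : 0 < ε) :
    ∃ δ > 0, ∀ z' : X, dist z z' < δ → mPot c z x ≤ mPot c z' x + ε := by
  set α := critValue c with hα
  set ε₁ := min ε 1 with hε₁def
  have hε₁ : 0 < ε₁ := lt_min hε one_pos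
  have hε₁le : ε₁ ≤ ε := min_le_left _ _
  have hε₁1 : ε₁ ≤ 1 := min_le_right _ _
  obtain ⟨L, M, hL0, hM0, hLM⟩ := dominated_linear_growth hB hK hlen hub
  obtain ⟨C, hC⟩ := hsl (L+1) (by linarith)
  obtain ⟨A₁, hA₁⟩ := hub (dist z x + 1)
  have hQ : ∀ z' : X, dist z z' ≤ 1 → mPot c z' x ≤ A₁ + α := by
    intro z' hz'
    refine le_trans (mPot_le_cost hsl z' x) ?_
    have h1 : dist z' x ≤ dist z x + 1 := by
      have h2 := dist_triangle z' z x
      have h3 : dist z' z = dist z z' := dist_comm _ _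
      linarith
    linarith [hA₁ z' x h1]
  set R := A₁ + 2 + L * (dist z x + 1) + M + C with hR
  have hcomp : IsCompact ((closedBall z 1) ×ˢ (closedBall z (R+2))) :=
    (isCompact_closedBall z 1).prod (isCompact_closedBall z (R+2))
  have huc := hcomp.uniformContinuousOn_of_continuous hcont.continuousOn
  rw [uniformContinuousOn_iff] at huc
  obtain ⟨δ', hδ'pos, hδ'⟩ := huc (ε₁/2) (by linarith)
  refine ⟨min δ' 1, lt_min hδ'pos one_pos, fun z' hz' => ?_⟩
  have hz1 : dist z z' ≤ 1 := le_of_lt (lt_of_lt_of_le hz' (min_le_right _ _))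
  have hlt : mPot c z' x < mPot c z' x + ε₁/2 := by linarith
  obtain ⟨r, hrmem, hrlt⟩ := exists_lt_of_csInf_lt (mSet_nonempty c z' x) hlt
  obtain ⟨n, hn, p, hp0, hpn, rfl⟩ := hrmem
  have hsplit := chCost_tail (c := c) p hn
  set u₀ : X → ℝ := wxFun c x with hu₀def
  have hu₀ : Dominated c α u₀ := wx_dominated hsl x
  set pr : ℕ → X := fun t => p (1 + t) with hprdef
  have hprn : pr (n-1) = x := by
    rw [hprdef]
    simp only
    rw [show 1 + (n-1) = n from by omega, hpn]
  have hpr0 : pr 0 = p 1 := by rw [hprdef]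
  have htail : -(L * dist x (p 1) + M) ≤ chCost c pr (n-1) + ((n:ℝ)-1) * α := by
    have h1 := dominated_chain hu₀ pr (n-1)
    rw [hprn, hpr0] at h1
    have h2 := hLM u₀ hu₀ x (p 1)
    have hc : ((n-1 : ℕ):ℝ) = (n:ℝ) - 1 := by
      have h3 : 1 ≤ n := hn
      push_cast [h3]
      ring
    rw [hc] at h1
    linarith
  have hfirst : (L+1) * dist z' (p 1) - C ≤ c (p 0) (p 1) := by
    rw [hp0]; exact hC z' (p 1)
  have hαsplit : ((n:ℝ)-1) * α + α = (n:ℝ) * α := by ring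
  have hrub : chCost c p n + (n:ℝ) * α < A₁ + α + 1 := by
    have h1 := hQ z' hz1
    have h05 : ε₁/2 ≤ 1 := by linarith
    linarith
  have hdb : dist z' (p 1) ≤ R - 1 := by
    have htri : dist x (p 1) ≤ dist z' (p 1) + 1 + dist z x := by
      have h1 := dist_triangle x z (p 1)
      have h2 := dist_triangle z z' (p 1)
      have h3 : dist x z = dist z x := dist_comm _ _
      linarith
    have hLd := mul_le_mul_of_nonneg_left htri hL0
    have e1 : L * (dist z' (p 1) + 1 + dist z x)
        = L * dist z' (p 1) + L * (dist z x + 1) := by ring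
    have e2 : (L+1) * dist z' (p 1) = L * dist z' (p 1) + dist z' (p 1) := by ring
    have hLz : 0 ≤ L * dist z' (p 1) := mul_nonneg hL0 dist_nonneg
    rw [hR]
    linarith [htail, hfirst, hrub, hsplit, hαsplit, hLd, e1, e2, hLz]
  have hmem1 : ((z', p 1) : X × X) ∈ (closedBall z 1) ×ˢ (closedBall z (R+2)) := by
    constructor
    · rw [mem_closedBall, dist_comm]
      exact hz1
    · rw [mem_closedBall]
      have h1 := dist_triangle (p 1) z' z
      have h2 : dist (p 1) z' = dist z' (p 1) := dist_comm _ _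
      have h3 : dist z' z = dist z z' := dist_comm _ _
      linarith
  have hmem2 : ((z, p 1) : X × X) ∈ (closedBall z 1) ×ˢ (closedBall z (R+2)) := by
    constructor
    · simp [hε₁]
    · rw [mem_closedBall]
      have h1 := dist_triangle (p 1) z' z
      have h2 : dist (p 1) z' = dist z' (p 1) := dist_comm _ _
      have h3 : dist z' z = dist z z' := dist_comm _ _
      linarith
  have hpair : dist ((z', p 1) : X × X) (z, p 1) < δ' := by
    rw [Prod.dist_eq]
    simp only [dist_self]
    have h4 : dist z' z < δ' := by
      rw [dist_comm]; exact lt_of_lt_of_le hz' (min_le_left _ _)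
    exact max_lt h4 hδ'pos
  have hcc := hδ' _ hmem1 _ hmem2 hpair
  simp only [Real.dist_eq] at hcc
  have habs := abs_lt.mp hcc
  have hrepl := chCost_replace_first (c := c) p hn z
  have hmemq : chCost c p n + c z (p 1) - c (p 0) (p 1) + (n:ℝ) * α ∈ mSet c z x := by
    refine ⟨n, hn, (fun i => if i = 0 then z else p i), by simp, ?_, ?_⟩
    · simp [show n ≠ 0 from by omega, hpn]
    · rw [show chCost c (fun i => if i = 0 then z else p i) n
          = chCost c p n + c z (p 1) - c (p 0) (p 1) from by linarith [hrepl]]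
  have hfinal := mPot_le_mem hsl hmemq
  rw [hp0] at hfinal
  linarith [habs.2, hfinal, hrlt, hε₁le]

end LSC

section Cont
variable [ProperSpace X] {c : X → X → ℝ} {B K : ℝ}

lemma continuousAt_of_mPot_self_zero (hcont : Continuous fun q : X × X => c q.1 q.2)
    (hsl : UniformlySuperlinear c)
    (hex : ∃ u : X → ℝ, Dominated c (critValue c) u)
    {x : X} (hm : mPot c x x = 0) : ContinuousAt (mane c x) x := by
  set α := critValue c with hα
  rw [Metric.continuousAt_iff]
  intro ε hε
  have hlt : mPot c x x < ε/4 := by rw [hm]; linarith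
  obtain ⟨r, hrmem, hrlt⟩ := exists_lt_of_csInf_lt (mSet_nonempty c x x) hlt
  have hr0 : 0 ≤ r := by
    obtain ⟨n, hn, p, hp0, hpn, rfl⟩ := hrmem
    exact cycle_nonneg hsl (by rw [hpn, hp0])
  obtain ⟨n, hn, p, hp0, hpn, rfl⟩ := hrmem
  -- continuity of the two sections
  have c1 : Continuous fun y => c (p (n-1)) y :=
    hcont.comp (continuous_const.prodMk continuous_id)
  have c2 : Continuous fun y => c y (p 1) :=
    hcont.comp (continuous_id.prodMk continuous_const)
  obtain ⟨δ₁, hδ₁pos, hδ₁⟩ := Metric.continuousAt_iff.mp c1.continuousAt (ε/4) (by linarith)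
  obtain ⟨δ₂, hδ₂pos, hδ₂⟩ := Metric.continuousAt_iff.mp c2.continuousAt (ε/4) (by linarith)
  refine ⟨min δ₁ δ₂, lt_min hδ₁pos hδ₂pos, fun y hy => ?_⟩
  have hy1 : dist y x < δ₁ := lt_of_lt_of_le hy (min_le_left _ _)
  have hy2 : dist y x < δ₂ := lt_of_lt_of_le hy (min_le_right _ _)
  have hb1 := hδ₁ hy1
  have hb2 := hδ₂ hy2
  simp only [Real.dist_eq] at hb1 hb2
  have hb1' := (abs_lt.mp hb1).2
  have hb2' := (abs_lt.mp hb2).2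
  -- upper bound : mane c x y ≤ mPot c x y ≤ r + ε/4
  have hup : mPot c x y ≤ chCost c p n + (n:ℝ)*α + ε/4 := by
    have hmem : chCost c p (n-1) + c (p (n-1)) y + (n:ℝ)*α ∈ mSet c x y := by
      refine ⟨n, hn, (fun i => if i = n then y else p i), ?_, by simp, ?_⟩
      · simp [show (0:ℕ) ≠ n from by omega, hp0]
      · rw [chCost_replace_last p hn y]
    have h1 := mPot_le_mem hsl hmem
    have h2 := chCost_split_last (c := c) p hn
    rw [hpn] at h2
    linarith
  -- lower bound : mane c x y ≥ -mPot c y x ≥ -(r + ε/4)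
  have hdown : mPot c y x ≤ chCost c p n + (n:ℝ)*α + ε/4 := by
    have hrepl := chCost_replace_first (c := c) p hn y
    have hmem : chCost c p n + c y (p 1) - c (p 0) (p 1) + (n:ℝ)*α ∈ mSet c y x := by
      refine ⟨n, hn, (fun i => if i = 0 then y else p i), by simp, ?_, ?_⟩
      · simp [show n ≠ 0 from by omega, hpn]
      · rw [show chCost c (fun i => if i = 0 then y else p i) n
            = chCost c p n + c y (p 1) - c (p 0) (p 1) from by linarith [hrepl]]
    have h1 := mPot_le_mem hsl hmem
    rw [hp0] at h1
    linarith
  have hle := mane_le_mPot hsl hex x y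
  have hge := neg_mPot_le_mane hsl (c := c) x y
  rw [mane_self hex x, Real.dist_eq]
  rw [abs_lt]
  constructor
  · have : -(chCost c p n + (n:ℝ)*α + ε/4) ≤ mane c x y := by linarith
    linarith
  · linarith

lemma mPot_self_zero_of_continuousAt (hcont : Continuous fun q : X × X => c q.1 q.2)
    (hsl : UniformlySuperlinear c) (hub : UniformlyBounded c)
    (hB : 1 ≤ B) (hK : 0 < K) (hlen : IsBLengthSpaceAtScale X B K)
    (hex : ∃ u : X → ℝ, Dominated c (critValue c) u)
    {x : X} (hx : (𝓝[≠] x).NeBot) (hca : ContinuousAt (mane c x) x) :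
    mPot c x x = 0 := by
  refine le_antisymm ?_ (mPot_self_nonneg hsl x)
  have key : ∀ ε > (0:ℝ), mPot c x x ≤ 2*ε := by
    intro ε hε
    obtain ⟨δ, hδpos, hδ⟩ := mPot_lsc_left hcont hsl hub hB hK hlen x x hε
    obtain ⟨δ₂, hδ₂pos, hδ₂⟩ := Metric.continuousAt_iff.mp hca ε hε
    set δ₃ := min δ δ₂ with hδ₃
    have hδ₃pos : 0 < δ₃ := lt_min hδpos hδ₂pos
    have hball : Metric.ball x δ₃ ∩ {x}ᶜ ∈ 𝓝[≠] x := by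
      apply Filter.inter_mem
      · exact mem_nhdsWithin_of_mem_nhds (Metric.ball_mem_nhds x hδ₃pos)
      · exact self_mem_nhdsWithin
    obtain ⟨y, hyball, hyne⟩ := Filter.nonempty_of_mem hball
    have hyx : dist y x < δ₃ := Metric.mem_ball.mp hyball
    have hmane : |mane c x y - mane c x x| < ε := by
      have := hδ₂ (lt_of_lt_of_le hyx (min_le_right _ _))
      rwa [Real.dist_eq] at this
    rw [mane_self hex x] at hmane
    have hyne' : y ≠ x := hyne
    have heq : mPot c x y = mane c x y :=
      le_antisymm (by
        have := mPot_le_mane hsl (c := c) hyne'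
        exact this) (mane_le_mPot hsl hex x y)
    have h1 : mPot c x x ≤ mPot c x y + ε := by
      apply hδ
      rw [dist_comm]
      exact lt_of_lt_of_le hyx (min_le_left _ _)
    have h2 := (abs_lt.mp hmane).2
    rw [heq] at h1
    linarith
  by_contra h
  push_neg at h
  have := key (mPot c x x / 4) (by linarith)
  linarith

lemma mPot_self_zero_of_aubry (hsl : UniformlySuperlinear c)
    {x : X} (hx : x ∈ projAubrySet c) : mPot c x x = 0 := by
  refine le_antisymm ?_ (mPot_self_nonneg hsl x)
  set α := critValue c with hα
  obtain ⟨z, hcal, hz0⟩ := hx (vxFun c x) (vx_dominated hsl x)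
  have h := hcal (-1) 1
  have hidx0 : ((-1 : ℤ) + ((1:ℕ) : ℤ)) = 0 := by norm_num
  have hidx1 : ((-1 : ℤ) + ((0:ℕ) : ℤ)) = -1 := by norm_num
  rw [Finset.sum_range_one] at h
  push_cast at h
  rw [hz0] at h
  have hvx0 : vxFun c x x = 0 := by unfold vxFun; simp
  rw [hvx0] at h
  by_cases hz1 : z (-1) = x
  · rw [hz1, hvx0] at h
    have h2 := mPot_le_cost hsl (c := c) x x
    linarith
  · have hv : vxFun c x (z (-1)) = mPot c x (z (-1)) := by unfold vxFun; simp [hz1]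
    rw [hv] at h
    have h2 := mPot_triangle hsl (c := c) x (z (-1)) x
    have h3 := mPot_le_cost hsl (c := c) (z (-1)) x
    linarith

end Cont

/-- ℤ-indexed chain sums: `Gs c g α a k = ∑_{i<k} (c (g (a+i)) (g (a+i+1)) + α)`. -/
noncomputable def Gs (c : X → X → ℝ) (g : ℤ → X) (α : ℝ) (a : ℤ) (k : ℕ) : ℝ :=
  ∑ i ∈ Finset.range k, (c (g (a + i)) (g (a + i + 1)) + α)

lemma Gs_eq (c : X → X → ℝ) (g : ℤ → X) (α : ℝ) (a : ℤ) (k : ℕ) :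
    Gs c g α a k = (∑ i ∈ Finset.range k, c (g (a + i)) (g (a + i + 1))) + k * α := by
  unfold Gs
  rw [Finset.sum_add_distrib, Finset.sum_const, Finset.card_range]
  push_cast
  ring

lemma Gs_add (c : X → X → ℝ) (g : ℤ → X) (α : ℝ) (a : ℤ) (k l : ℕ) :
    Gs c g α a (k + l) = Gs c g α a k + Gs c g α (a + k) l := by
  unfold Gs
  rw [Finset.sum_range_add]
  congr 1
  refine Finset.sum_congr rfl fun i _ => ?_
  have h1 : a + ((k + i : ℕ) : ℤ) = a + (k:ℤ) + (i:ℤ) := by push_cast; ring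
  rw [h1]

lemma Gs_ge_mPot {c : X → X → ℝ} (hsl : UniformlySuperlinear c) (g : ℤ → X) (a : ℤ)
    {k : ℕ} (hk : 1 ≤ k) : mPot c (g a) (g (a + k)) ≤ Gs c g (critValue c) a k := by
  set qc : ℕ → X := fun t => g (a + t) with hqc
  have hmem : Gs c g (critValue c) a k ∈ mSet c (g a) (g (a + k)) := by
    refine ⟨k, hk, qc, by simp [hqc], rfl, ?_⟩
    rw [Gs_eq]
    congr 1
    unfold chCost
    refine Finset.sum_congr rfl fun i _ => ?_
    have h1 : a + ((i + 1 : ℕ) : ℤ) = a + (i:ℤ) + 1 := by push_cast; ring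
    rw [hqc]
    simp only
    rw [h1]
  exact mPot_le_mem hsl hmem

lemma dominated_le_Gs {c : X → X → ℝ} {u : X → ℝ} (hu : Dominated c (critValue c) u)
    (g : ℤ → X) (a : ℤ) (k : ℕ) :
    u (g (a + k)) - u (g a) ≤ Gs c g (critValue c) a k := by
  induction k with
  | zero => simp [Gs]
  | succ m ih =>
    have h1 := hu (g (a + m)) (g (a + m + 1))
    have h2 : a + ((m + 1 : ℕ) : ℤ) = a + (m:ℤ) + 1 := by push_cast; ring
    rw [h2]
    have h3 : Gs c g (critValue c) a (m + 1)
        = Gs c g (critValue c) a m + (c (g (a + m)) (g (a + m + 1)) + critValue c) := by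
      unfold Gs
      rw [Finset.sum_range_succ]
    rw [h3]
    linarith

/-- Periodic extension of a cycle. -/
noncomputable def pext (p : ℕ → X) (n : ℕ) : ℤ → X := fun i => p ((i % (n : ℤ)).toNat)

section Cycle

variable {c : X → X → ℝ} {p : ℕ → X} {n : ℕ} {x : X}

lemma emod_lemmas {n : ℕ} (hn : 1 ≤ n) (i : ℤ) :
    0 ≤ i % (n:ℤ) ∧ i % (n:ℤ) < n := by
  have hn0 : (0:ℤ) < (n:ℤ) := by exact_mod_cast (by omega : 0 < n)
  exact ⟨Int.emod_nonneg i hn0.ne', Int.emod_lt_of_pos i hn0⟩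

lemma pext_succ (hn : 1 ≤ n) (hp0 : p 0 = x) (hpn : p n = x) (i : ℤ) :
    pext p n (i + 1) = p ((i % (n:ℤ)).toNat + 1) := by
  obtain ⟨hge, hlt⟩ := emod_lemmas hn i
  set t : ℕ := (i % (n:ℤ)).toNat with ht
  have htn : (t : ℤ) = i % n := Int.toNat_of_nonneg hge
  have htlt : t < n := by omega
  have hkey : (i + 1) % (n:ℤ) = ((t:ℤ) + 1) % n := by
    have h1 : i % (n:ℤ) + (n:ℤ) * (i / n) = i := Int.emod_add_mul_ediv i n
    have h2 : i + 1 = ((t:ℤ) + 1) + (i / n) * n := by rw [htn]; linarith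
    rw [h2, Int.add_mul_emod_self_right]
  rcases Nat.lt_or_ge (t + 1) n with hcase | hcase
  · have h3 : ((t:ℤ) + 1) % n = (t:ℤ) + 1 := by
      rw [Int.emod_eq_of_lt (by positivity) (by exact_mod_cast hcase)]
    unfold pext
    rw [hkey, h3, show ((t:ℤ)+1).toNat = t + 1 from by omega]
  · have hteq : t + 1 = n := by omega
    have h3 : ((t:ℤ) + 1) % n = 0 := by
      have : ((t:ℤ) + 1) = n := by exact_mod_cast hteq
      rw [this, Int.emod_self]
    unfold pext
    rw [hkey, h3]
    have h4 : p 0 = p (t + 1) := by rw [hp0, hteq, hpn]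
    simpa using h4

lemma pext_zero (hn : 1 ≤ n) (hp0 : p 0 = x) {i : ℤ} (hi : i % (n:ℤ) = 0) :
    pext p n i = x := by
  unfold pext
  rw [hi]
  simpa using hp0

lemma Gs_cycle (hn : 1 ≤ n) (hp0 : p 0 = x) (hpn : p n = x) {a : ℤ} (ha : a % n = 0)
    (α : ℝ) : Gs c (pext p n) α a n = chCost c p n + n * α := by
  have hmain : ∀ i ∈ Finset.range n,
      c (pext p n (a + i)) (pext p n (a + i + 1)) + α = c (p i) (p (i + 1)) + α := by
    intro i hi
    simp only [Finset.mem_range] at hi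
    have hmod : (a + (i:ℤ)) % n = (i:ℤ) := by
      have h1 : a % n + (n:ℤ) * (a / n) = a := Int.emod_add_mul_ediv a n
      rw [ha] at h1
      have h2 : a + (i:ℤ) = (i:ℤ) + (a / n) * n := by linarith
      rw [h2, Int.add_mul_emod_self_right]
      exact Int.emod_eq_of_lt (by positivity) (by exact_mod_cast hi)
    have h1 : pext p n (a + i) = p i := by
      unfold pext
      rw [hmod]
      simp
    have h2 : pext p n (a + i + 1) = p (i + 1) := by
      rw [pext_succ hn hp0 hpn (a + i), hmod]
      simp
    rw [h1, h2]
  unfold Gs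
  rw [Finset.sum_congr rfl hmain, Finset.sum_add_distrib, Finset.sum_const, Finset.card_range]
  unfold chCost
  push_cast
  ring

lemma Gs_cycle_mul (hn : 1 ≤ n) (hp0 : p 0 = x) (hpn : p n = x) {a : ℤ} (ha : a % n = 0)
    (α : ℝ) (q : ℕ) : Gs c (pext p n) α a (q * n) = q * (chCost c p n + n * α) := by
  induction q with
  | zero => simp [Gs]
  | succ m ih =>
    have h1 : (m + 1) * n = m * n + n := by ring
    rw [h1, Gs_add, ih]
    have ha2 : (a + ((m * n : ℕ) : ℤ)) % n = 0 := by
      have : (a + ((m * n : ℕ) : ℤ)) = a + (m:ℤ) * n := by push_cast; ring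
      rw [this, Int.add_mul_emod_self_right, ha]
    rw [Gs_cycle hn hp0 hpn ha2]
    push_cast
    ring

lemma star_bound (hsl : UniformlySuperlinear c)
    (hn : 1 ≤ n) (hp0 : p 0 = x) (hpn : p n = x) (hm : mPot c x x = 0)
    {a b : ℤ} (hab : a ≤ b) :
    mPot c x (pext p n a) + Gs c (pext p n) (critValue c) a ((b - a).toNat)
      + mPot c (pext p n b) x
      ≤ (((b - a).toNat : ℝ) + 1) * (chCost c p n + (n:ℝ) * critValue c) := by
  set α := critValue c with hα
  set W := chCost c p n + (n:ℝ) * α with hW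
  have hW0 : 0 ≤ W := cycle_nonneg hsl (by rw [hpn, hp0])
  set a0 : ℤ := (n:ℤ) * (a / n) with ha0
  have hmod : a % (n:ℤ) + (n:ℤ) * (a / n) = a := Int.emod_add_mul_ediv a (n:ℤ)
  obtain ⟨hge, hlt⟩ := emod_lemmas hn a
  set k1 : ℕ := (a % (n:ℤ)).toNat with hk1
  have hk1c : (k1:ℤ) = a % n := Int.toNat_of_nonneg hge
  have hk1n : k1 < n := by omega
  have ha0k1 : a0 + (k1:ℤ) = a := by rw [ha0, hk1c]; linarith
  have ha0mod : a0 % (n:ℤ) = 0 := by rw [ha0]; exact Int.mul_emod_right _ _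
  set kmid : ℕ := (b - a).toNat with hkmid
  have hkmidc : (kmid:ℤ) = b - a := Int.toNat_of_nonneg (by omega)
  set q : ℕ := kmid + 1 with hq
  have hslt : k1 + kmid < q * n := by
    have h1 : kmid * 1 ≤ kmid * n := Nat.mul_le_mul_left kmid hn
    have h2 : q * n = kmid * n + n := by rw [hq]; ring
    have h3 : kmid * 1 = kmid := by ring
    linarith
  set k2 : ℕ := q * n - (k1 + kmid) with hk2
  have hk2sum : (k1 + kmid) + k2 = q * n := Nat.add_sub_cancel' (le_of_lt hslt)
  have hk2pos : 1 ≤ k2 := by omega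
  have hb : a0 + (((k1 + kmid) : ℕ):ℤ) = b := by push_cast; linarith
  have hdec : Gs c (pext p n) α a0 (q * n)
      = Gs c (pext p n) α a0 k1 + Gs c (pext p n) α a kmid + Gs c (pext p n) α b k2 := by
    rw [← hk2sum, Gs_add c (pext p n) α a0 (k1 + kmid) k2, Gs_add c (pext p n) α a0 k1 kmid,
      ha0k1, hb]
  have htotal : Gs c (pext p n) α a0 (q*n) = q * W :=
    Gs_cycle_mul hn hp0 hpn ha0mod α q
  have hpre : mPot c x (pext p n a) ≤ Gs c (pext p n) α a0 k1 := by
    rcases Nat.eq_zero_or_pos k1 with h0 | h1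
    · have hamod : a % (n:ℤ) = 0 := by omega
      have hga : pext p n a = x := pext_zero hn hp0 hamod
      rw [hga, hm]
      simp [Gs, h0]
    · have hthis := Gs_ge_mPot hsl (pext p n) a0 (k := k1) h1
      rw [ha0k1] at hthis
      rw [pext_zero hn hp0 ha0mod] at hthis
      exact hthis
  have hsuf : mPot c (pext p n b) x ≤ Gs c (pext p n) α b k2 := by
    have hthis := Gs_ge_mPot hsl (pext p n) b (k := k2) hk2pos
    have hbk2 : b + (k2:ℤ) = a0 + ((q*n : ℕ):ℤ) := by
      push_cast
      have h4 : ((k1:ℤ) + kmid) + k2 = ((q*n : ℕ):ℤ) := by exact_mod_cast congrArg (Nat.cast : ℕ → ℤ) hk2sum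
      push_cast at h4
      linarith
    rw [hbk2] at hthis
    have hmod2 : (a0 + ((q*n:ℕ):ℤ)) % n = 0 := by
      have h5 : a0 + ((q*n:ℕ):ℤ) = a0 + (q:ℤ)*n := by push_cast; ring
      rw [h5, Int.add_mul_emod_self_right, ha0mod]
    rw [pext_zero hn hp0 hmod2] at hthis
    exact hthis
  have hqW : (q:ℝ) * W ≤ ((kmid:ℝ) + 1) * W := by
    apply mul_le_mul_of_nonneg_right _ hW0
    rw [hq]
    push_cast
    linarith
  linarith [hpre, hsuf, hdec, htotal, hqW]

end Cycle

section Main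
variable [ProperSpace X] {c : X → X → ℝ} {B K : ℝ}

lemma aubry_of_mPot_self_zero (hcont : Continuous fun q : X × X => c q.1 q.2)
    (hsl : UniformlySuperlinear c) (hub : UniformlyBounded c)
    (hB : 1 ≤ B) (hK : 0 < K) (hlen : IsBLengthSpaceAtScale X B K)
    {x : X} (hm : mPot c x x = 0) : x ∈ projAubrySet c := by
  classical
  set α := critValue c with hα
  obtain ⟨L, M, hL0, hM0, hLM⟩ := dominated_linear_growth hB hK hlen hub
  obtain ⟨C, hC⟩ := hsl (L+1) (by linarith)
  set u₀ : X → ℝ := vxFun c x with hu₀def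
  have hu₀ : Dominated c α u₀ := vx_dominated hsl x
  set E : ℝ := C - α + M with hE
  -- cheap cycles
  have hcyc : ∀ j : ℕ, ∃ (nn : ℕ) (pp : ℕ → X), 1 ≤ nn ∧ pp 0 = x ∧ pp nn = x ∧
      chCost c pp nn + (nn:ℝ) * α < 1/(j+1) := by
    intro j
    have hpos : (0:ℝ) < 1/(j+1) := by positivity
    have hlt : mPot c x x < 1/(j+1) := by rw [hm]; exact hpos
    obtain ⟨r, hrmem, hrlt⟩ := exists_lt_of_csInf_lt (mSet_nonempty c x x) hlt
    obtain ⟨n, hn, p, hp0, hpn, rfl⟩ := hrmem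
    exact ⟨n, p, hn, hp0, hpn, hrlt⟩
  choose nn pp hnn hpp0 hppn hWlt using hcyc
  set Y : ℕ → ℤ → X := fun j => pext (pp j) (nn j) with hY
  set W : ℕ → ℝ := fun j => chCost c (pp j) (nn j) + (nn j : ℝ) * α with hWdef
  have hW0 : ∀ j, 0 ≤ W j := fun j => cycle_nonneg hsl (by rw [hppn, hpp0])
  have hWj : ∀ j, W j < 1/(j+1) := hWlt
  -- step bound
  have hstep : ∀ j (i : ℤ), dist (Y j i) (Y j (i+1)) ≤ 1 + E := by
    intro j i
    obtain ⟨hge, hlt⟩ := emod_lemmas (hnn j) i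
    set t : ℕ := (i % (nn j : ℤ)).toNat with ht
    have htn : t < nn j := by omega
    have h1 : Y j i = pp j t := rfl
    have h2 : Y j (i+1) = pp j (t+1) := pext_succ (hnn j) (hpp0 j) (hppn j) i
    set D : ℕ → ℝ := fun s => c (pp j s) (pp j (s+1)) + α - (u₀ (pp j (s+1)) - u₀ (pp j s))
      with hD
    have hD0 : ∀ s, 0 ≤ D s := fun s => by
      have := hu₀ (pp j s) (pp j (s+1))
      rw [hD]
      simp only
      linarith
    have hDsum : ∑ s ∈ Finset.range (nn j), D s = W j := by
      rw [hD, hWdef]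
      simp only
      rw [Finset.sum_sub_distrib]
      have htel : ∑ s ∈ Finset.range (nn j), (u₀ (pp j (s+1)) - u₀ (pp j s))
          = u₀ (pp j (nn j)) - u₀ (pp j 0) := Finset.sum_range_sub (fun s => u₀ (pp j s)) (nn j)
      rw [htel, hppn, hpp0]
      unfold chCost
      rw [Finset.sum_add_distrib, Finset.sum_const, Finset.card_range]
      push_cast
      ring
    have hDt : D t ≤ W j := by
      rw [← hDsum]
      exact Finset.single_le_sum (fun s _ => hD0 s) (Finset.mem_range.mpr htn)
    have hDlow : dist (pp j t) (pp j (t+1)) - E ≤ D t := by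
      have h3 := hC (pp j t) (pp j (t+1))
      have h4 := hLM u₀ hu₀ (pp j t) (pp j (t+1))
      rw [hD, hE]
      simp only
      nlinarith [dist_nonneg (x := pp j t) (y := pp j (t+1))]
    have hWj1 : W j ≤ 1 := by
      have h5 : 1/((j:ℝ)+1) ≤ 1 := by
        rw [div_le_one (by positivity)]
        linarith [Nat.cast_nonneg (α := ℝ) j]
      exact le_trans (hWj j).le h5
    rw [h1, h2]
    linarith
  -- window bound
  have hY0 : ∀ j, Y j 0 = x := fun j =>
    pext_zero (hnn j) (hpp0 j) (by simp)
  have hwinpos : ∀ j (m : ℕ), dist x (Y j (m:ℤ)) ≤ (m:ℝ) * (1+E) := by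
    intro j m
    induction m with
    | zero =>
      rw [show ((0:ℕ):ℤ) = 0 from rfl, hY0 j]
      simp
    | succ m ih =>
      have h1 := hstep j (m:ℤ)
      have h2 := dist_triangle x (Y j (m:ℤ)) (Y j ((m:ℤ)+1))
      have h3 : ((m+1:ℕ):ℤ) = (m:ℤ)+1 := by push_cast; ring
      rw [h3]
      push_cast
      nlinarith [ih, h1, h2]
  have hwinneg : ∀ j (m : ℕ), dist x (Y j (-(m:ℤ))) ≤ (m:ℝ) * (1+E) := by
    intro j m
    induction m with
    | zero =>
      rw [show -((0:ℕ):ℤ) = 0 from rfl, hY0 j]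
      simp
    | succ m ih =>
      have h1 := hstep j (-(m:ℤ)-1)
      have h4 : (-(m:ℤ)-1) + 1 = -(m:ℤ) := by ring
      rw [h4] at h1
      have h2 := dist_triangle x (Y j (-(m:ℤ))) (Y j (-(m:ℤ)-1))
      have h3 : -((m+1:ℕ):ℤ) = -(m:ℤ)-1 := by push_cast; ring
      rw [h3]
      push_cast
      rw [dist_comm (Y j (-(m:ℤ)-1)) (Y j (-(m:ℤ)))] at h1
      nlinarith [ih, h1, h2]
  have hwin : ∀ j (i : ℤ), dist x (Y j i) ≤ (i.natAbs : ℝ) * (1+E) := by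
    intro j i
    rcases Int.natAbs_eq i with h | h
    · have hthis := hwinpos j i.natAbs
      rw [← h] at hthis
      exact hthis
    · have hthis := hwinneg j i.natAbs
      rw [← h] at hthis
      exact hthis
  -- compactness
  set ρ : ℤ → ℝ := fun i => (i.natAbs : ℝ) * (1+E) with hρ
  set Sset : Set (ℤ → X) := Set.pi univ (fun i => closedBall x (ρ i)) with hSset
  have hSc : IsCompact Sset := isCompact_univ_pi (fun i => isCompact_closedBall _ _)
  have hYmem : ∀ j, Y j ∈ Sset := by
    intro j
    rw [hSset, Set.mem_univ_pi]
    intro i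
    rw [mem_closedBall, dist_comm]
    exact hwin j i
  obtain ⟨g, hgS, ψ, hψmono, hψtend⟩ := hSc.isSeqCompact hYmem
  have hpt : ∀ i : ℤ, Tendsto (fun j => Y (ψ j) i) atTop (𝓝 (g i)) := by
    intro i
    exact tendsto_pi_nhds.mp hψtend i
  have hg0 : g 0 = x := by
    have h1 := hpt 0
    have h2 : (fun j => Y (ψ j) 0) = fun _ => x := funext fun j => hY0 (ψ j)
    rw [h2] at h1
    exact tendsto_nhds_unique h1 tendsto_const_nhds
  -- limit star bound
  have hstar : ∀ a b : ℤ, a ≤ b →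
      mPot c x (g a) + Gs c g α a ((b-a).toNat) + mPot c (g b) x ≤ 0 := by
    intro a b hab
    set k : ℕ := (b-a).toNat with hk
    have hkey : ∀ ε > (0:ℝ),
        mPot c x (g a) + Gs c g α a k + mPot c (g b) x ≤ 4*ε := by
      intro ε hε
      obtain ⟨δ₁, hδ₁pos, hδ₁⟩ := mPot_lsc_left hcont hsl hub hB hK hlen x (g a) hε
      obtain ⟨δ₂, hδ₂pos, hδ₂⟩ := mPot_lsc_right hcont hsl hub hB hK hlen x (g b) hε
      -- middle sum converges
      have hmid : Tendsto (fun j => Gs c (Y (ψ j)) α a k) atTop (𝓝 (Gs c g α a k)) := by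
        unfold Gs
        apply tendsto_finset_sum
        intro i _
        have hpair : Tendsto (fun j => (Y (ψ j) (a+i), Y (ψ j) (a+i+1))) atTop
            (𝓝 (g (a+i), g (a+i+1))) := (hpt (a+i)).prodMk_nhds (hpt (a+i+1))
        have hcc := (hcont.tendsto (g (a+i), g (a+i+1))).comp hpair
        exact hcc.add tendsto_const_nhds
      obtain ⟨N₁, hN₁⟩ := Metric.tendsto_atTop.mp (hpt a) δ₁ hδ₁pos
      obtain ⟨N₂, hN₂⟩ := Metric.tendsto_atTop.mp (hpt b) δ₂ hδ₂pos
      obtain ⟨N₃, hN₃⟩ := Metric.tendsto_atTop.mp hmid ε hε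
      obtain ⟨N₄, hN₄⟩ := exists_nat_gt (((k:ℝ)+1)/ε)
      set j : ℕ := max (max N₁ N₂) (max N₃ N₄) with hj
      have hj1 : N₁ ≤ j := le_trans (le_max_left _ _) (le_max_left _ _)
      have hj2 : N₂ ≤ j := le_trans (le_max_right _ _) (le_max_left _ _)
      have hj3 : N₃ ≤ j := le_trans (le_max_left _ _) (le_max_right _ _)
      have hj4 : N₄ ≤ j := le_trans (le_max_right _ _) (le_max_right _ _)
      have e1 : mPot c x (g a) ≤ mPot c x (Y (ψ j) a) + ε := by
        apply hδ₁
        have := hN₁ j hj1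
        rw [dist_comm]
        exact this
      have e2 : mPot c (g b) x ≤ mPot c (Y (ψ j) b) x + ε := by
        apply hδ₂
        have := hN₂ j hj2
        rw [dist_comm]
        exact this
      have e3 : Gs c g α a k ≤ Gs c (Y (ψ j)) α a k + ε := by
        have := hN₃ j hj3
        rw [Real.dist_eq] at this
        have h6 := (abs_lt.mp this).1
        linarith
      have e4 : (((k:ℝ))+1) * W (ψ j) ≤ ε := by
        have h7 : W (ψ j) < 1/((ψ j : ℝ)+1) := hWj (ψ j)
        have h8 : (j:ℝ) ≤ (ψ j : ℝ) := by exact_mod_cast hψmono.le_apply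
        have h9 : (N₄:ℝ) ≤ (j:ℝ) := by exact_mod_cast hj4
        have h10 : ((k:ℝ)+1)/ε < (N₄:ℝ) := hN₄
        have h11 : 0 < (ψ j : ℝ) + 1 := by positivity
        have h12 : 1/((ψ j : ℝ)+1) ≤ 1/((N₄:ℝ)+1) := by
          apply div_le_div_of_nonneg_left (by norm_num) (by positivity)
          linarith
        have h13 : 0 ≤ (k:ℝ)+1 := by positivity
        have h14 : ((k:ℝ)+1) * W (ψ j) ≤ ((k:ℝ)+1) * (1/((N₄:ℝ)+1)) := by
          apply mul_le_mul_of_nonneg_left _ h13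
          linarith
        have h15 : ((k:ℝ)+1) * (1/((N₄:ℝ)+1)) ≤ ε := by
          rw [mul_one_div, div_le_iff₀ (by positivity)]
          rw [div_lt_iff₀ hε] at h10
          nlinarith [hε]
        exact le_trans h14 h15
      have hsb := star_bound (c := c) (p := pp (ψ j)) (n := nn (ψ j)) (x := x) hsl
        (hnn (ψ j)) (hpp0 (ψ j)) (hppn (ψ j)) hm hab
      rw [← hk] at hsb
      have hqW2 : (((k:ℝ))+1) * (chCost c (pp (ψ j)) (nn (ψ j)) + (nn (ψ j):ℝ) * α)
          = ((k:ℝ)+1) * W (ψ j) := by rw [hWdef]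
      rw [hqW2] at hsb
      have hYj : Y (ψ j) = pext (pp (ψ j)) (nn (ψ j)) := rfl
      rw [← hYj] at hsb
      linarith
    by_contra hcon
    push_neg at hcon
    have := hkey ((mPot c x (g a) + Gs c g α a k + mPot c (g b) x)/8) (by linarith)
    linarith
  -- conclusion
  intro u hu
  refine ⟨g, ?_, hg0⟩
  intro m k
  have hle := dominated_le_Gs hu g m k
  have hstar2 := hstar m (m + k) (by omega)
  have hknat : ((m + (k:ℤ)) - m).toNat = k := by simp
  rw [hknat] at hstar2
  have hu1 : u (g m) - u x ≤ mPot c x (g m) := dominated_le_mPot hu x (g m)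
  have hu2 : u x - u (g (m + k)) ≤ mPot c (g (m + k)) x := dominated_le_mPot hu (g (m + k)) x
  have hGs := Gs_eq c g α m k
  rw [hGs] at hle hstar2
  linarith
end Main

end AubryProof

theorem aubry_iff_mane_continuous {X : Type*} [MetricSpace X] [Nonempty X] [ProperSpace X]
    {B K : ℝ} (hB : 1 ≤ B) (hK : 0 < K) (hlen : IsBLengthSpaceAtScale X B K)
    {c : X → X → ℝ} (hcont : Continuous fun q : X × X => c q.1 q.2)
    (hsl : UniformlySuperlinear c) (hub : UniformlyBounded c) (x : X) (hx : (𝓝[≠] x).NeBot) :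
    ContinuousAt (mane c x) x ↔ x ∈ projAubrySet c := by
  classical
  by_cases hex : ∃ u : X → ℝ, Dominated c (critValue c) u
  · constructor
    · intro hca
      have hm := AubryProof.mPot_self_zero_of_continuousAt hcont hsl hub hB hK hlen hex hx hca
      exact AubryProof.aubry_of_mPot_self_zero hcont hsl hub hB hK hlen hm
    · intro hxA
      have hm := AubryProof.mPot_self_zero_of_aubry hsl hxA
      exact AubryProof.continuousAt_of_mPot_self_zero hcont hsl hex hm
  · have h1 : ∀ y, mane c x y = 0 := by
      intro y
      have h2 : {r : ℝ | ∃ u : X → ℝ, Dominated c (critValue c) u ∧ r = u y - u x} = ∅ := by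
        ext r
        simp only [Set.mem_setOf_eq, Set.mem_empty_iff_false, iff_false, not_exists]
        rintro u ⟨hu, _⟩
        exact hex ⟨u, hu⟩
      rw [mane, h2, Real.sSup_empty]
    constructor
    · intro _ u hu
      exact absurd ⟨u, hu⟩ hex
    · intro _
      have h3 : mane c x = fun _ => 0 := funext h1
      rw [h3]
      exact continuousAt_const
end

section
/- For every α[0]-dominated function u : X → ℝ, the Aubry sets of u and of T⁻u coincide: a bi-infinite sequence (xₙ)_{n∈ℤ} is (u,c,α[0])-calibrated if and only if it is (T⁻u,c,α[0])-calibrated. In particular A_u = A_{T⁻u} and Â_u = Â_{T⁻u}. -/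
open Metric Set Filter Topology

theorem aubry_set_eq_aubry_set_Tm {X : Type*} [MetricSpace X] [Nonempty X] [ProperSpace X]
    {B K : ℝ} (hB : 1 ≤ B) (hK : 0 < K) (hlen : IsBLengthSpaceAtScale X B K)
    {c : X → X → ℝ} (hcont : Continuous fun q : X × X => c q.1 q.2)
    (hsl : UniformlySuperlinear c) (hub : UniformlyBounded c)
    {u : X → ℝ} (hu : Dominated c (critValue c) u) :
    (∀ x : ℤ → X, IsCalibrated c (critValue c) u x ↔
      IsCalibrated c (critValue c) (Tm c u) x) ∧
    projAubry c u = projAubry c (Tm c u) ∧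
    aubryPairs c u = aubryPairs c (Tm c u) := by
  set α := critValue c with hα
  have hlb : ∀ x : X, u x - α ≤ Tm c u x := fun x =>
    le_ciInf (fun y => by have := hu y x; show u x - α ≤ u y + c y x; linarith)
  have hub' : ∀ x y : X, Tm c u x ≤ u y + c y x := by
    intro x y
    exact ciInf_le ⟨u x - α, by rintro r ⟨z, rfl⟩; have := hu z x; show u x - α ≤ u z + c z x; linarith⟩ y
  have key : ∀ x : ℤ → X, IsCalibrated c α u x → ∀ m : ℤ, Tm c u (x m) = u (x m) - α := by
    intro x hx m
    have h := hx (m - 1) 1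
    simp only [Finset.sum_range_one, Nat.cast_one, Nat.cast_zero, one_mul] at h
    have e1 : m - 1 + (1 : ℤ) = m := by ring
    have e0 : m - 1 + (0 : ℤ) = m - 1 := by ring
    have e01 : m - 1 + (0 : ℤ) + 1 = m := by ring
    rw [e01, e0, e1] at h
    refine le_antisymm ?_ (hlb _)
    have h2 := hub' (x m) (x (m - 1))
    linarith
  have key2 : ∀ x : ℤ → X, IsCalibrated c α (Tm c u) x →
      ∀ m : ℤ, Tm c u (x m) = u (x m) - α := by
    intro x hx m
    have h := hx m 1
    simp only [Finset.sum_range_one, Nat.cast_one, Nat.cast_zero, one_mul] at h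
    rw [show m + (0:ℤ) + 1 = m + 1 from by ring, show m + (0:ℤ) = m from by ring] at h
    refine le_antisymm ?_ (hlb _)
    have h2 := hub' (x (m + 1)) (x m)
    linarith
  have hiff : ∀ x : ℤ → X, IsCalibrated c α u x ↔ IsCalibrated c α (Tm c u) x := by
    intro x
    constructor
    · intro hx m k
      have h := hx m k
      have k1 := key x hx (m + k)
      have k2 := key x hx m
      rw [k1, k2]
      linarith
    · intro hx m k
      have h := hx m k
      have k1 := key2 x hx (m + k)
      have k2 := key2 x hx m
      rw [k1, k2] at h
      linarith
  refine ⟨hiff, ?_, ?_⟩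
  · ext p
    constructor
    · rintro ⟨x, hx, hp⟩; exact ⟨x, (hiff x).mp hx, hp⟩
    · rintro ⟨x, hx, hp⟩; exact ⟨x, (hiff x).mpr hx, hp⟩
  · ext q
    constructor
    · rintro ⟨x, n, hx, h1, h2⟩; exact ⟨x, n, (hiff x).mp hx, h1, h2⟩
    · rintro ⟨x, n, hx, h1, h2⟩; exact ⟨x, n, (hiff x).mpr hx, h1, h2⟩
end
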